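/- arXiv:1810.04393 — 11 statements merged into one kernel-verified Lean document; each statement's English description precedes it below -/
import Mathlib

section
/- Let 1 < p < ∞ and define u : ℝ → ℝ by u(x) = −1 for x < −1, u(x) = x for −1 ≤ x ≤ 1, and u(x) = 1 for x > 1, and let g : ℝ → ℝ be the indicator function of the interval [−1,1]. Then u(x) − u(y) = ∫_y^x g(t) dt for all y ≤ x, ∫_ℝ |g(t)|^p dt = 2, the Hölder ratio of u at the points 1 and −1 equals 2^{1/p} = (∫_ℝ |g|^p)^{1/p}, and for every x ≠ y the (1−1/p)-Hölder ratio of u at x, y is at most 2^{1/p}. Hence equality holds in the one-dimensional Morrey inequality with constant 1, and the sharp constant in one dimension is 1. -/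
open MeasureTheory

/-- The explicit one-dimensional extremal: `u = -1` on `(-∞,-1)`, `u(x) = x` on `[-1,1]`,
`u = 1` on `(1,∞)`, with derivative `g = 𝟙_{[-1,1]}`.  It realizes equality in the
one-dimensional Morrey inequality with constant `1`, so the sharp constant is `1`. -/
theorem morrey_one_dim_extremal (p : ℝ) (hp : 1 < p)
    (u : ℝ → ℝ)
    (hu : u = fun x => if x < -1 then (-1 : ℝ) else if x ≤ 1 then x else 1)
    (g : ℝ → ℝ)
    (hg : g = (Set.Icc (-1 : ℝ) 1).indicator fun _ => (1 : ℝ)) :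
    (∀ x y : ℝ, y ≤ x → u x - u y = ∫ t in y..x, g t) ∧
    (∫ t, |g t| ^ p) = 2 ∧
    |u 1 - u (-1)| / |(1 : ℝ) - (-1)| ^ (1 - 1 / p) = 2 ^ (1 / p) ∧
    (∀ x y : ℝ, x ≠ y → |u x - u y| / |x - y| ^ (1 - 1 / p) ≤ 2 ^ (1 / p)) := by
  have hp0 : (0 : ℝ) < p := by linarith
  -- `u` rewritten with max/min
  have hmax : u = fun x => max (min x 1) (-1) := by
    funext x
    rw [hu]
    dsimp only
    split_ifs with h1 h2
    · rw [min_eq_left (by linarith), max_eq_right (by linarith)]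
    · rw [min_eq_left h2, max_eq_left (by linarith)]
    · rw [min_eq_right (by linarith), max_eq_left (by linarith)]
  have hcont : Continuous u := by
    rw [hmax]
    exact ((continuous_id.min continuous_const).max continuous_const)
  -- the a.e. modification of g with the correct right derivative
  set g' : ℝ → ℝ := (Set.Ico (-1 : ℝ) 1).indicator fun _ => (1 : ℝ) with hg'
  have hg'int : Integrable g' volume :=
    (integrable_indicator_iff measurableSet_Ico).2
      (integrableOn_const measure_Ico_lt_top.ne enorm_ne_top)
  have hae : ∀ᵐ t : ℝ ∂volume, g t = g' t := by
    have hs : ({(1 : ℝ)} : Set ℝ)ᶜ ∈ ae volume :=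
      compl_mem_ae_iff.2 (measure_singleton 1)
    filter_upwards [hs] with t ht
    have ht1 : t ≠ 1 := by simpa using ht
    by_cases h : t ∈ Set.Icc (-1 : ℝ) 1
    · have h' : t ∈ Set.Ico (-1 : ℝ) 1 := ⟨h.1, lt_of_le_of_ne h.2 ht1⟩
      simp [hg, hg', Set.indicator_of_mem h, Set.indicator_of_mem h']
    · have h' : t ∉ Set.Ico (-1 : ℝ) 1 := fun hc => h ⟨hc.1, hc.2.le⟩
      simp [hg, hg', Set.indicator_of_notMem h, Set.indicator_of_notMem h']
  -- right derivative of u is g'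
  have hud : ∀ t : ℝ, HasDerivWithinAt u (g' t) (Set.Ioi t) t := by
    intro t
    rcases lt_or_ge t (-1) with h | h
    · have hgt : g' t = 0 := by
        rw [hg', Set.indicator_of_notMem (by simp [Set.mem_Ico]; intro hc; linarith)]
      rw [hgt]
      have h1 : u =ᶠ[nhdsWithin t (Set.Ioi t)] fun _ => (-1 : ℝ) := by
        have : Set.Iio (-1 : ℝ) ∈ nhdsWithin t (Set.Ioi t) :=
          nhdsWithin_le_nhds (Iio_mem_nhds h)
        filter_upwards [this] with s hs
        have hs' : s < -1 := hs
        rw [hu]; dsimp only; split_ifs <;> linarith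
      exact (hasDerivWithinAt_const t _ (-1 : ℝ)).congr_of_eventuallyEq h1
        (by rw [hu]; dsimp only; split_ifs <;> linarith)
    rcases lt_or_ge t 1 with h' | h'
    · have hgt : g' t = 1 := by
        rw [hg', Set.indicator_of_mem (Set.mem_Ico.2 ⟨h, h'⟩)]
      rw [hgt]
      have h1 : u =ᶠ[nhdsWithin t (Set.Ioi t)] id := by
        have hA : Set.Iio (1 : ℝ) ∈ nhdsWithin t (Set.Ioi t) :=
          nhdsWithin_le_nhds (Iio_mem_nhds h')
        filter_upwards [hA, self_mem_nhdsWithin] with s hs1 hs2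
        have hs3 : t < s := hs2
        have hs4 : s < 1 := hs1
        rw [hu]; dsimp only; simp only [id]; split_ifs <;> linarith
      have hx : u t = t := by
        rw [hu]; dsimp only; split_ifs <;> linarith
      exact (hasDerivWithinAt_id t _).congr_of_eventuallyEq h1 hx
    · have hgt : g' t = 0 := by
        rw [hg', Set.indicator_of_notMem (by simp [Set.mem_Ico]; intro hc; linarith)]
      rw [hgt]
      have h1 : u =ᶠ[nhdsWithin t (Set.Ioi t)] fun _ => (1 : ℝ) := by
        filter_upwards [self_mem_nhdsWithin] with s hs
        have hs' : t < s := hs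
        have : (1 : ℝ) < s := lt_of_le_of_lt h' hs'
        rw [hu]; dsimp only; split_ifs <;> linarith
      have hx : u t = 1 := by
        rcases eq_or_lt_of_le h' with h'' | h'' <;>
          · rw [hu]; dsimp only; split_ifs <;> linarith
      exact (hasDerivWithinAt_const t _ (1 : ℝ)).congr_of_eventuallyEq h1 hx
  -- bounds on u
  have hbd : ∀ t : ℝ, -1 ≤ u t ∧ u t ≤ 1 := by
    intro t
    rw [hu]; dsimp only; split_ifs with h1 h2 <;> constructor <;> linarith
  have hlip : ∀ a b : ℝ, |u a - u b| ≤ |a - b| := by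
    intro a b
    rw [hmax]
    calc |max (min a 1) (-1) - max (min b 1) (-1)| ≤ |min a 1 - min b 1| :=
          abs_max_sub_max_le_abs _ _ _
      _ ≤ max |a - b| |(1 : ℝ) - 1| := abs_min_sub_min_le_max _ _ _ _
      _ = |a - b| := by simp
  refine ⟨?_, ?_, ?_, ?_⟩
  · -- FTC
    intro x y hxy
    have key : ∫ t in y..x, g' t = u x - u y :=
      intervalIntegral.integral_eq_sub_of_hasDeriv_right_of_le hxy hcont.continuousOn
        (fun t _ => hud t) hg'int.intervalIntegrable
    have : ∫ t in y..x, g t = ∫ t in y..x, g' t :=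
      intervalIntegral.integral_congr_ae (hae.mono fun t h _ => h)
    rw [this, key]
  · -- L^p norm
    have habs : (fun t => |g t| ^ p) = (Set.Icc (-1 : ℝ) 1).indicator fun _ => (1 : ℝ) := by
      funext t
      by_cases h : t ∈ Set.Icc (-1 : ℝ) 1
      · simp [hg, Set.indicator_of_mem h]
      · simp [hg, Set.indicator_of_notMem h, Real.zero_rpow (ne_of_gt hp0)]
    rw [habs, integral_indicator_const (1 : ℝ) measurableSet_Icc, measureReal_def, Real.volume_Icc,
      ENNReal.toReal_ofReal (by norm_num)]
    norm_num
  · -- ratio at the extremal points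
    have hu1 : u 1 = 1 := by rw [hu]; norm_num
    have hu2 : u (-1) = -1 := by rw [hu]; norm_num
    have h2 : (2 : ℝ) / 2 ^ (1 - 1 / p) = 2 ^ (1 / p) := by
      rw [eq_comm, eq_div_iff (ne_of_gt (Real.rpow_pos_of_pos two_pos _)),
        ← Real.rpow_add two_pos, show (1 / p + (1 - 1 / p) : ℝ) = 1 by ring, Real.rpow_one]
    have habs2 : |(1 : ℝ) - (-1)| = 2 := by norm_num
    rw [hu1, hu2, habs2, h2]
  · -- Hölder bound
    intro x y hxy
    have hd : 0 < |x - y| := abs_pos.2 (sub_ne_zero.2 hxy)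
    have h1p : (0 : ℝ) < 1 / p := by positivity
    have h1p' : 1 / p < 1 := by rw [div_lt_one hp0]; linarith
    have hden : 0 < |x - y| ^ (1 - 1 / p) := Real.rpow_pos_of_pos hd _
    rw [div_le_iff₀ hden]
    rcases le_total |x - y| 2 with h | h
    · calc |u x - u y| ≤ |x - y| := hlip x y
        _ = |x - y| ^ (1 / p) * |x - y| ^ (1 - 1 / p) := by
            rw [← Real.rpow_add hd, show (1 / p + (1 - 1 / p) : ℝ) = 1 by ring, Real.rpow_one]
        _ ≤ 2 ^ (1 / p) * |x - y| ^ (1 - 1 / p) :=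
            mul_le_mul_of_nonneg_right (Real.rpow_le_rpow hd.le h h1p.le) hden.le
    · calc |u x - u y| ≤ 2 := by
            have h1 := hbd x
            have h2 := hbd y
            rw [abs_sub_le_iff]
            constructor <;> linarith
        _ = 2 ^ (1 / p) * 2 ^ (1 - 1 / p) := by
            rw [← Real.rpow_add two_pos, show (1 / p + (1 - 1 / p) : ℝ) = 1 by ring,
              Real.rpow_one]
        _ ≤ 2 ^ (1 / p) * |x - y| ^ (1 - 1 / p) :=
            mul_le_mul_of_nonneg_left (Real.rpow_le_rpow (by norm_num) h (by linarith))
              (Real.rpow_nonneg (by norm_num) _)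
end

section
/- Let 1 < p < ∞, let g : ℝ → ℝ be measurable with ∫_ℝ |g(t)|^p dt < ∞, and let u : ℝ → ℝ satisfy u(x) − u(y) = ∫_y^x g(t) dt for all y ≤ x. Suppose there exist y0 < x0 with |u(x0) − u(y0)| = (∫_ℝ |g(t)|^p dt)^{1/p} · |x0 − y0|^{1−1/p} (i.e. equality holds in the one-dimensional Morrey inequality, attained at x0, y0). Then g = 0 almost everywhere on ℝ \ (y0, x0) and g(t) = (u(x0) − u(y0))/(x0 − y0) for almost every t ∈ (y0, x0). -/
open MeasureTheory

lemma young_eq_aux {p q a b : ℝ} (hpq : Real.HolderConjugate p q) (ha : 0 ≤ a) (hb : 0 < b)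
    (h : a * b = a ^ p / p + b ^ q / q) : a = b ^ (q - 1) := by
  by_contra hne
  have hp0 : 0 < p := hpq.pos
  have hq0 : 0 < q := hpq.symm.pos
  set a0 : ℝ := b ^ (q - 1) with ha0def
  have ha0 : 0 ≤ a0 := (Real.rpow_pos_of_pos hb _).le
  have ha0p : a0 ^ p = b ^ q := by
    rw [ha0def, ← Real.rpow_mul hb.le, hpq.symm.sub_one_mul_conj]
  have ha0b : a0 * b = b ^ q := by
    rw [ha0def, show b ^ (q - 1) * b = b ^ (q - 1) * b ^ (1:ℝ) by rw [Real.rpow_one],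
      ← Real.rpow_add hb, sub_add_cancel]
  set z : ℝ := (a + a0) / 2 with hzdef
  have hz : 0 ≤ z := by positivity
  have hz1 : z * b ≤ z ^ p / p + b ^ q / q := Real.young_inequality_of_nonneg hz hb.le hpq
  have hz2 : z ^ p < a ^ p / 2 + a0 ^ p / 2 := by
    have H := (strictConvexOn_rpow hpq.lt).2 (Set.mem_Ici.2 ha) (Set.mem_Ici.2 ha0) hne
      (by norm_num : (0:ℝ) < 1/2) (by norm_num : (0:ℝ) < 1/2) (by norm_num)
    have hzz : (1/2 : ℝ) • a + (1/2 : ℝ) • a0 = z := by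
      simp only [smul_eq_mul, hzdef]; ring
    rw [hzz] at H
    have H' : z ^ p < 1/2 * a ^ p + 1/2 * a0 ^ p := by simpa only [smul_eq_mul] using H
    linarith
  rw [ha0p] at hz2
  have hP : 0 < p⁻¹ := inv_pos.2 hp0
  have hinv : p⁻¹ + q⁻¹ = 1 := hpq.inv_add_inv_eq_one
  have e1 : z * b = (a ^ p * p⁻¹ + b ^ q * q⁻¹ + b ^ q) / 2 := by
    have hzb : z * b = (a * b + a0 * b) / 2 := by rw [hzdef]; ring
    rw [hzb, h, ha0b, div_eq_mul_inv (a^p) p, div_eq_mul_inv (b^q) q]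
  have e2 : z ^ p * p⁻¹ < (a ^ p * p⁻¹ + b ^ q * p⁻¹) / 2 := by
    have := mul_lt_mul_of_pos_right hz2 hP
    exact this.trans_le (le_of_eq (by ring))
  have e3 : z * b ≤ z ^ p * p⁻¹ + b ^ q * q⁻¹ := by
    rw [div_eq_mul_inv, div_eq_mul_inv] at hz1; exact hz1
  have hbq : 0 < b ^ q := Real.rpow_pos_of_pos hb q
  have e4 : b ^ q * p⁻¹ + b ^ q * q⁻¹ = b ^ q := by rw [← mul_add, hinv, mul_one]
  linarith

/-- Rigidity in the one-dimensional Morrey inequality: if equality is attained at a pair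
`y0 < x0`, then the density `g` vanishes a.e. outside `(y0, x0)` and is a.e. equal to the
constant `(u x0 - u y0)/(x0 - y0)` on `(y0, x0)`. -/
theorem morrey_one_dim_equality_rigidity (p : ℝ) (hp : 1 < p)
    (g : ℝ → ℝ) (hg : Measurable g)
    (hgp : Integrable (fun t => |g t| ^ p))
    (u : ℝ → ℝ)
    (hu : ∀ x y : ℝ, y ≤ x → u x - u y = ∫ t in y..x, g t)
    (x0 y0 : ℝ) (hlt : y0 < x0)
    (heq : |u x0 - u y0| = (∫ t, |g t| ^ p) ^ (1 / p) * |x0 - y0| ^ (1 - 1 / p)) :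
    (∀ᵐ t : ℝ, t ∉ Set.Ioo y0 x0 → g t = 0) ∧
    (∀ᵐ t : ℝ, t ∈ Set.Ioo y0 x0 → g t = (u x0 - u y0) / (x0 - y0)) := by
  have hp0 : 0 < p := lt_trans one_pos hp
  have hpq : p.HolderConjugate (p / (p - 1)) := Real.HolderConjugate.conjExponent hp
  set q : ℝ := p / (p - 1) with hqdef
  have hq0 : 0 < q := hpq.symm.pos
  set L : ℝ := x0 - y0 with hLdef
  have hL : 0 < L := sub_pos.2 hlt
  set I : ℝ := ∫ t, |g t| ^ p with hIdef
  have hI0 : 0 ≤ I := integral_nonneg fun t => Real.rpow_nonneg (abs_nonneg _) p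
  rw [abs_of_pos hL] at heq
  have hT : u x0 - u y0 = ∫ t in Set.Ioo y0 x0, g t := by
    rw [hu x0 y0 hlt.le, intervalIntegral.integral_of_le hlt.le, integral_Ioc_eq_integral_Ioo]
  have hfin : volume (Set.Ioo y0 x0) < ⊤ := by
    rw [Real.volume_Ioo]; exact ENNReal.ofReal_lt_top
  have hconst1 : IntegrableOn (fun _ : ℝ => (1:ℝ)) (Set.Ioo y0 x0) :=
    integrableOn_const hfin.ne
  have hgi : IntegrableOn g (Set.Ioo y0 x0) := by
    have hbound : IntegrableOn (fun t => |g t| ^ p + 1) (Set.Ioo y0 x0) :=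
      hgp.restrict.add hconst1
    refine Integrable.mono' hbound hg.aestronglyMeasurable.restrict ?_
    refine Filter.Eventually.of_forall fun t => ?_
    rw [Real.norm_eq_abs]
    rcases le_or_gt (|g t|) 1 with h1 | h1
    · have h2 : (0:ℝ) ≤ |g t| ^ p := Real.rpow_nonneg (abs_nonneg _) _
      linarith
    · have h2 : |g t| ^ (1:ℝ) ≤ |g t| ^ p := Real.rpow_le_rpow_of_exponent_le h1.le hp.le
      rw [Real.rpow_one] at h2
      linarith
  have habsgi : IntegrableOn (fun t => |g t|) (Set.Ioo y0 x0) := hgi.abs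
  have hgpi : IntegrableOn (fun t => |g t| ^ p) (Set.Ioo y0 x0) := hgp.integrableOn
  set S : ℝ := ∫ t in Set.Ioo y0 x0, |g t| with hSdef
  set J : ℝ := ∫ t in Set.Ioo y0 x0, |g t| ^ p with hJdef
  have hJI : J ≤ I :=
    setIntegral_le_integral hgp
      (Filter.Eventually.of_forall fun t => Real.rpow_nonneg (abs_nonneg _) p)
  have hTS : |u x0 - u y0| ≤ S := by
    rw [hT]
    simpa [Real.norm_eq_abs] using
      norm_integral_le_integral_norm (μ := volume.restrict (Set.Ioo y0 x0)) g
  by_cases hI : I = 0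
  · have h0 := (integral_eq_zero_iff_of_nonneg
      (fun t => Real.rpow_nonneg (abs_nonneg _) p) hgp).1 hI
    have hg0 : ∀ᵐ t : ℝ, g t = 0 := by
      filter_upwards [h0] with t ht
      simp only [Pi.zero_apply] at ht
      exact abs_eq_zero.1 ((Real.rpow_eq_zero (abs_nonneg _) (ne_of_gt hp0)).1 ht)
    have hT0 : u x0 - u y0 = 0 := by
      rw [hT]
      exact integral_eq_zero_of_ae (ae_restrict_of_ae hg0)
    constructor
    · filter_upwards [hg0] with t ht _; exact ht
    · filter_upwards [hg0] with t ht _; rw [ht, hT0, zero_div]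
  · have hIpos : 0 < I := lt_of_le_of_ne hI0 (Ne.symm hI)
    have hμ : 0 < I / L := div_pos hIpos hL
    set lam : ℝ := (I / L) ^ (1/q) with hlamdef
    have hlam : 0 < lam := Real.rpow_pos_of_pos hμ _
    have hlamq : lam ^ q = I / L := by
      rw [hlamdef, ← Real.rpow_mul hμ.le, one_div, inv_mul_cancel₀ (ne_of_gt hq0),
        Real.rpow_one]
    have h1q : (1:ℝ)/p + 1/q = 1 := by
      rw [one_div, one_div]; exact hpq.inv_add_inv_eq_one
    have hlamT : lam * |u x0 - u y0| = I := by
      rw [heq, hlamdef, Real.div_rpow hI0 hL.le]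
      have eI : I ^ ((1:ℝ)/q) * I ^ ((1:ℝ)/p) = I := by
        rw [← Real.rpow_add hIpos]
        rw [show (1:ℝ)/q + 1/p = 1 by linarith, Real.rpow_one]
      have eL : L ^ (1 - 1/p) / L ^ ((1:ℝ)/q) = 1 := by
        rw [← Real.rpow_sub hL, show (1 - 1/p - 1/q : ℝ) = 0 by linarith, Real.rpow_zero]
      calc I ^ ((1:ℝ)/q) / L ^ ((1:ℝ)/q) * (I ^ ((1:ℝ)/p) * L ^ (1 - 1/p))
          = (I ^ ((1:ℝ)/q) * I ^ ((1:ℝ)/p)) * (L ^ (1 - 1/p) / L ^ ((1:ℝ)/q)) := by ring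
        _ = I := by rw [eI, eL, mul_one]
    have hvol : (volume (Set.Ioo y0 x0)).toReal = L := by
      rw [Real.volume_Ioo, ← hLdef, ENNReal.toReal_ofReal hL.le]
    set Φ : ℝ → ℝ := fun t => |g t| ^ p / p + lam ^ q / q - lam * |g t| with hΦdef
    have hconst2 : IntegrableOn (fun _ : ℝ => lam ^ q / q) (Set.Ioo y0 x0) :=
      integrableOn_const hfin.ne
    have hA1 : IntegrableOn (fun t => |g t| ^ p / p) (Set.Ioo y0 x0) := hgpi.div_const p
    have hA : IntegrableOn (fun t => |g t| ^ p / p + lam ^ q / q) (Set.Ioo y0 x0) :=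
      hA1.add hconst2
    have hB : IntegrableOn (fun t => lam * |g t|) (Set.Ioo y0 x0) := habsgi.const_mul lam
    have hΦint : IntegrableOn Φ (Set.Ioo y0 x0) := hA.sub hB
    have hΦval : ∫ t in Set.Ioo y0 x0, Φ t = J / p + (lam ^ q / q) * L - lam * S := by
      calc ∫ t in Set.Ioo y0 x0, Φ t
          = (∫ t in Set.Ioo y0 x0, (|g t| ^ p / p + lam ^ q / q)) -
            ∫ t in Set.Ioo y0 x0, lam * |g t| := integral_sub hA hB
        _ = ((∫ t in Set.Ioo y0 x0, |g t| ^ p / p) +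
            ∫ t in Set.Ioo y0 x0, (lam ^ q / q : ℝ)) - lam * S := by
            rw [integral_add hA1 hconst2, integral_const_mul]
        _ = J / p + (lam ^ q / q) * L - lam * S := by
            rw [integral_div, integral_const, measureReal_restrict_apply_univ, measureReal_def, hvol, smul_eq_mul]
            ring
    have hΦnn : ∀ t, 0 ≤ Φ t := fun t => by
      have hY := Real.young_inequality_of_nonneg (abs_nonneg (g t)) hlam.le hpq
      simp only [hΦdef]
      nlinarith [hY]
    have hΦ0 : 0 ≤ ∫ t in Set.Ioo y0 x0, Φ t := integral_nonneg fun t => hΦnn t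
    have hIsplit : I / p + I / q = I := by
      have : I/p + I/q = I * (1/p + 1/q) := by ring
      rw [this, h1q, mul_one]
    have hc : (lam ^ q / q) * L = I / q := by
      rw [hlamq]; field_simp
    have hlamS_le : lam * S ≤ I := by
      have h0 := hΦ0; rw [hΦval, hc] at h0
      have hdiv : J / p ≤ I / p := by gcongr
      linarith
    have hlamT_le : I ≤ lam * S := by
      calc I = lam * |u x0 - u y0| := hlamT.symm
        _ ≤ lam * S := mul_le_mul_of_nonneg_left hTS hlam.le
    have hlamSI : lam * S = I := le_antisymm hlamS_le hlamT_le
    have hS : S = |u x0 - u y0| :=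
      mul_left_cancel₀ (ne_of_gt hlam) (hlamSI.trans hlamT.symm)
    have hJ : J = I := by
      have h0 := hΦ0; rw [hΦval, hc, hlamSI] at h0
      have h2 : I / p ≤ J / p := by linarith
      have h3 := mul_le_mul_of_nonneg_right h2 hp0.le
      rw [div_mul_cancel₀ _ (ne_of_gt hp0), div_mul_cancel₀ _ (ne_of_gt hp0)] at h3
      linarith
    have hΦzero : ∫ t in Set.Ioo y0 x0, Φ t = 0 := by
      rw [hΦval, hc, hlamSI, hJ]; linarith
    -- part 1
    have hcompl : ∫ t in (Set.Ioo y0 x0)ᶜ, |g t| ^ p = 0 := by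
      have hsplit := integral_add_compl (measurableSet_Ioo (a := y0) (b := x0)) hgp
      rw [← hJdef, ← hIdef] at hsplit
      linarith
    have part1 : ∀ᵐ t : ℝ, t ∉ Set.Ioo y0 x0 → g t = 0 := by
      have h0 := (integral_eq_zero_iff_of_nonneg_ae
        (Filter.Eventually.of_forall fun t => Real.rpow_nonneg (abs_nonneg _) p)
        hgp.restrict).1 hcompl
      have h1 := (ae_restrict_iff' measurableSet_Ioo.compl).1 h0
      filter_upwards [h1] with t ht hmem
      have h2 := ht hmem
      simp only [Pi.zero_apply] at h2
      exact abs_eq_zero.1 ((Real.rpow_eq_zero (abs_nonneg _) (ne_of_gt hp0)).1 h2)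
    -- part 2
    set m : ℝ := (I / L) ^ (1/p) with hmdef
    have hm : 0 < m := Real.rpow_pos_of_pos hμ _
    have hlamm : lam ^ (q - 1) = m := by
      have e : (1:ℝ)/q * (q - 1) = 1/p := by
        have hq' : q ≠ 0 := ne_of_gt hq0
        have hp' : p ≠ 0 := ne_of_gt hp0
        have hmc := hpq.symm.sub_one_mul_conj
        field_simp
        linarith [hmc]
      rw [hlamdef, hmdef, ← Real.rpow_mul hμ.le, e]
    have hΦae := (integral_eq_zero_iff_of_nonneg_ae
      (Filter.Eventually.of_forall hΦnn) hΦint).1 hΦzero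
    have habs_m : ∀ᵐ t ∂(volume.restrict (Set.Ioo y0 x0)), |g t| = m := by
      filter_upwards [hΦae] with t ht
      simp only [hΦdef, Pi.zero_apply] at ht
      have hy : |g t| * lam = |g t| ^ p / p + lam ^ q / q := by linarith
      rw [young_eq_aux hpq (abs_nonneg (g t)) hlam hy, hlamm]
    have hTabs : |u x0 - u y0| = m * L := by
      rw [heq, hmdef, Real.div_rpow hI0 hL.le, Real.rpow_sub hL, Real.rpow_one]
      ring
    set ε : ℝ := if 0 ≤ u x0 - u y0 then 1 else -1 with hεdef
    have hεT : ε * (u x0 - u y0) = |u x0 - u y0| := by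
      rcases le_or_gt 0 (u x0 - u y0) with h | h
      · rw [hεdef, if_pos h, one_mul, abs_of_nonneg h]
      · rw [hεdef, if_neg (not_le.2 h), abs_of_neg h]; ring
    have hsq : ε * ε = 1 := by
      rcases le_or_gt 0 (u x0 - u y0) with h | h
      · rw [hεdef, if_pos h]; norm_num
      · rw [hεdef, if_neg (not_le.2 h)]; norm_num
    have hεabs : ∀ t, ε * g t ≤ |g t| := by
      intro t
      rcases le_or_gt 0 (u x0 - u y0) with h | h
      · rw [hεdef, if_pos h, one_mul]; exact le_abs_self _
      · rw [hεdef, if_neg (not_le.2 h)]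
        have := neg_abs_le (g t); linarith
    have hzero2 : ∫ t in Set.Ioo y0 x0, (|g t| - ε * g t) = 0 := by
      rw [integral_sub habsgi (hgi.const_mul ε), integral_const_mul, ← hSdef, ← hT]
      linarith [hεT, hS]
    have hsub : IntegrableOn (fun t => |g t| - ε * g t) (Set.Ioo y0 x0) :=
      habsgi.sub (hgi.const_mul ε)
    have hsign := (integral_eq_zero_iff_of_nonneg_ae
      (Filter.Eventually.of_forall fun t => sub_nonneg.2 (hεabs t))
      hsub).1 hzero2
    have part2' : ∀ᵐ t ∂(volume.restrict (Set.Ioo y0 x0)),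
        g t = (u x0 - u y0) / (x0 - y0) := by
      filter_upwards [habs_m, hsign] with t h1 h2
      simp only [Pi.zero_apply, Pi.sub_apply] at h2
      have hgt : g t = ε * m := by
        have ha : ε * g t = |g t| := by linarith
        have hb : ε * (ε * g t) = ε * |g t| := by rw [ha]
        rw [← mul_assoc, hsq, one_mul] at hb
        rw [hb, h1]
      have hTεm : u x0 - u y0 = ε * (m * L) := by
        have hb : ε * (ε * (u x0 - u y0)) = ε * |u x0 - u y0| := by rw [hεT]
        rw [← mul_assoc, hsq, one_mul] at hb
        rw [hb, hTabs]
      rw [hgt, hTεm, ← hLdef]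
      field_simp
    exact ⟨part1, (ae_restrict_iff' measurableSet_Ioo).1 part2'⟩
end

section
/- Let n ≥ 1, n < p < ∞, C_* > 0, and let x0, y0 ∈ ℝⁿ be distinct. Let u : ℝⁿ → ℝ be differentiable with ∫_{ℝⁿ} ‖∇u‖^p dx < ∞ and suppose |u(x0) − u(y0)|^p / ‖x0 − y0‖^{p−n} = C_*^p ∫_{ℝⁿ} ‖∇u‖^p dx. Let φ : ℝⁿ → ℝ be differentiable with ∫_{ℝⁿ} ‖∇φ‖^p dx < ∞ and suppose that for every t ∈ ℝ, |u(x0) − u(y0) + t(φ(x0) − φ(y0))|^p / ‖x0 − y0‖^{p−n} ≤ C_*^p ∫_{ℝⁿ} ‖∇u + t∇φ‖^p dx. Then the function x ↦ ‖∇u(x)‖^{p−2}⟨∇u(x), ∇φ(x)⟩ is integrable and C_*^p ∫_{ℝⁿ} ‖∇u‖^{p−2}⟨∇u, ∇φ⟩ dx = |u(x0) − u(y0)|^{p−2}(u(x0) − u(y0)) (φ(x0) − φ(y0)) / ‖x0 − y0‖^{p−n}. -/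
open MeasureTheory RealInnerProductSpace

section Aux

variable {E : Type*} [NormedAddCommGroup E] [InnerProductSpace ℝ E]

lemma aux_hasDerivAt {p : ℝ} (hp : 1 < p) (v w : E) (t : ℝ) :
    HasDerivAt (fun s : ℝ => ‖v + s • w‖ ^ p)
      (p * (‖v + t • w‖ ^ (p - 2) * ⟪v + t • w, w⟫)) t := by
  have h1 : HasDerivAt (fun s : ℝ => v + s • w) w t := by
    simpa using ((hasDerivAt_id t).smul_const w).const_add v
  have h2 := (hasFDerivAt_norm_rpow (v + t • w) hp).comp_hasDerivAt t h1
  refine h2.congr_deriv ?_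
  simp only [ContinuousLinearMap.smul_apply, innerSL_apply_apply, smul_eq_mul]
  ring

lemma aux_bound {p : ℝ} (hp : 1 < p) (g h : E) {t : ℝ} (ht : |t| ≤ 1) :
    |p * (‖g + t • h‖ ^ (p - 2) * ⟪g + t • h, h⟫)| ≤
      p * ((‖g‖ + ‖h‖) ^ (p - 1) * (‖g‖ + ‖h‖)) := by
  have hp0 : (0 : ℝ) < p := lt_trans zero_lt_one hp
  set v := g + t • h with hv
  have hvle : ‖v‖ ≤ ‖g‖ + ‖h‖ := by
    calc ‖v‖ ≤ ‖g‖ + ‖t • h‖ := norm_add_le _ _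
    _ ≤ ‖g‖ + ‖h‖ := by
        rw [norm_smul]
        have : ‖t‖ * ‖h‖ ≤ 1 * ‖h‖ :=
          mul_le_mul_of_nonneg_right (by simpa using ht) (norm_nonneg _)
        simpa using add_le_add_left this ‖g‖
  have hhle : ‖h‖ ≤ ‖g‖ + ‖h‖ := le_add_of_nonneg_left (norm_nonneg _)
  rw [abs_mul, abs_of_pos hp0, abs_mul, abs_of_nonneg (Real.rpow_nonneg (norm_nonneg v) _)]
  refine mul_le_mul_of_nonneg_left ?_ hp0.le
  by_cases hv0 : v = 0
  · rw [hv0]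
    simp only [inner_zero_left, abs_zero, mul_zero]
    positivity
  · have hvpos : 0 < ‖v‖ := norm_pos_iff.mpr hv0
    have h1 : ‖v‖ ^ (p - 2) * |⟪v, h⟫| ≤ ‖v‖ ^ (p - 2) * (‖v‖ * ‖h‖) :=
      mul_le_mul_of_nonneg_left (abs_real_inner_le_norm v h)
        (Real.rpow_nonneg (norm_nonneg v) _)
    refine h1.trans ?_
    have h2 : ‖v‖ ^ (p - 2) * (‖v‖ * ‖h‖) = ‖v‖ ^ (p - 1) * ‖h‖ := by
      have he : p - 2 + 1 = p - 1 := by ring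
      rw [← mul_assoc, ← Real.rpow_add_one (ne_of_gt hvpos), he]
    rw [h2]
    have hexp : (0 : ℝ) ≤ p - 1 := by linarith
    exact mul_le_mul (Real.rpow_le_rpow (norm_nonneg v) hvle hexp) hhle (norm_nonneg h)
      (Real.rpow_nonneg (by positivity) _)

lemma aux_sum_rpow {p a b : ℝ} (hp : 1 < p) (ha : 0 ≤ a) (hb : 0 ≤ b) :
    (a + b) ^ (p - 1) * (a + b) ≤ 2 ^ p * (a ^ p + b ^ p) := by
  have hab : 0 ≤ a + b := add_nonneg ha hb
  have key : (a + b) ^ (p - 1) * (a + b) = (a + b) ^ p := by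
    rcases eq_or_lt_of_le hab with h | h
    · rw [← h, Real.zero_rpow (by linarith), Real.zero_rpow (by linarith), zero_mul]
    · rw [← Real.rpow_add_one (ne_of_gt h)]
      ring_nf
  rw [key]
  have h1 : a + b ≤ 2 * max a b := by
    rcases le_total a b with h | h
    · have : max a b = b := max_eq_right h
      rw [this]; linarith
    · have : max a b = a := max_eq_left h
      rw [this]; linarith
  have h2 : (a + b) ^ p ≤ (2 * max a b) ^ p :=
    Real.rpow_le_rpow hab h1 (by linarith)
  refine h2.trans ?_
  rw [Real.mul_rpow (by norm_num) (le_max_of_le_left ha)]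
  gcongr
  rcases le_total a b with h | h
  · rw [max_eq_right h]
    exact le_add_of_nonneg_left (Real.rpow_nonneg ha p)
  · rw [max_eq_left h]
    exact le_add_of_nonneg_right (Real.rpow_nonneg hb p)

end Aux

/-- If `u` is an extremal for Morrey's inequality whose Hölder ratio is maximized at
`x0 ≠ y0`, then `u` satisfies the weak Euler–Lagrange (p-Laplace) identity against any
admissible test function `φ`. -/
theorem extremal_weak_pde (n : ℕ) (hn : 1 ≤ n) (p : ℝ) (hp : (n : ℝ) < p)
    (Cs : ℝ) (hCs : 0 < Cs)
    (x0 y0 : EuclideanSpace ℝ (Fin n)) (hxy : x0 ≠ y0)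
    (u : EuclideanSpace ℝ (Fin n) → ℝ) (hu : Differentiable ℝ u)
    (hui : Integrable (fun x => ‖gradient u x‖ ^ p))
    (hmax : |u x0 - u y0| ^ p / ‖x0 - y0‖ ^ (p - (n : ℝ)) =
      Cs ^ p * ∫ x, ‖gradient u x‖ ^ p)
    (φ : EuclideanSpace ℝ (Fin n) → ℝ) (hφ : Differentiable ℝ φ)
    (hφi : Integrable (fun x => ‖gradient φ x‖ ^ p))
    (hineq : ∀ t : ℝ,
      |u x0 - u y0 + t * (φ x0 - φ y0)| ^ p / ‖x0 - y0‖ ^ (p - (n : ℝ)) ≤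
        Cs ^ p * ∫ x, ‖gradient u x + t • gradient φ x‖ ^ p) :
    Integrable (fun x => ‖gradient u x‖ ^ (p - 2) * ⟪gradient u x, gradient φ x⟫) ∧
    Cs ^ p * ∫ x, ‖gradient u x‖ ^ (p - 2) * ⟪gradient u x, gradient φ x⟫ =
      |u x0 - u y0| ^ (p - 2) * (u x0 - u y0) * (φ x0 - φ y0) /
        ‖x0 - y0‖ ^ (p - (n : ℝ)) := by
  have hp1 : (1 : ℝ) < p := lt_of_le_of_lt (by exact_mod_cast hn) hp
  have hp0 : (0 : ℝ) < p := lt_trans zero_lt_one hp1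
  set G : EuclideanSpace ℝ (Fin n) → EuclideanSpace ℝ (Fin n) := fun x => gradient u x with hG
  set H : EuclideanSpace ℝ (Fin n) → EuclideanSpace ℝ (Fin n) := fun x => gradient φ x with hH
  have mG : Measurable G :=
    (InnerProductSpace.toDual ℝ _).symm.continuous.measurable.comp (measurable_fderiv ℝ u)
  have mH : Measurable H :=
    (InnerProductSpace.toDual ℝ _).symm.continuous.measurable.comp (measurable_fderiv ℝ φ)
  set A : ℝ := u x0 - u y0 with hA
  set B : ℝ := φ x0 - φ y0 with hB
  set K : ℝ := ‖x0 - y0‖ ^ (p - (n : ℝ)) with hK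
  -- the parametric family and its derivative
  set F : ℝ → EuclideanSpace ℝ (Fin n) → ℝ := fun t x => ‖G x + t • H x‖ ^ p with hF
  set F' : ℝ → EuclideanSpace ℝ (Fin n) → ℝ :=
    fun t x => p * (‖G x + t • H x‖ ^ (p - 2) * ⟪G x + t • H x, H x⟫) with hF'
  have hmeas : ∀ t : ℝ, Measurable fun x => G x + t • H x := fun t =>
    mG.add (mH.const_smul t)
  have hF_meas : ∀ t : ℝ, AEStronglyMeasurable (F t) volume := fun t =>
    (((hmeas t).norm.pow_const p)).aestronglyMeasurable
  have hF_int : Integrable (F 0) := by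
    refine hui.congr (Filter.Eventually.of_forall fun x => ?_)
    simp [hF, hG]
  have hF'_meas : AEStronglyMeasurable (F' 0) volume := by
    refine (measurable_const.mul ((((hmeas 0).norm.pow_const (p - 2))).mul ?_)).aestronglyMeasurable
    exact (hmeas 0).inner mH
  set bound : EuclideanSpace ℝ (Fin n) → ℝ :=
    fun x => p * ((‖G x‖ + ‖H x‖) ^ (p - 1) * (‖G x‖ + ‖H x‖)) with hbound
  have h_bound : ∀ᵐ x : EuclideanSpace ℝ (Fin n), ∀ t ∈ Metric.ball (0 : ℝ) 1,
      ‖F' t x‖ ≤ bound x := by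
    refine Filter.Eventually.of_forall fun x t ht => ?_
    have ht' : |t| ≤ 1 := by
      rw [Metric.mem_ball, Real.dist_eq, sub_zero] at ht
      exact le_of_lt ht
    have hb := aux_bound hp1 (G x) (H x) ht'
    simp only [hF', hbound, Real.norm_eq_abs]
    exact hb
  have bound_integrable : Integrable bound := by
    refine Integrable.mono' (((hui.add hφi).const_mul (p * 2 ^ p)))
      ((measurable_const.mul ((((mG.norm.add mH.norm).pow_const (p - 1))).mul
        (mG.norm.add mH.norm))).aestronglyMeasurable)
      (Filter.Eventually.of_forall fun x => ?_)
    have h1 : (0:ℝ) ≤ bound x := by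
      have := Real.rpow_nonneg (add_nonneg (norm_nonneg (G x)) (norm_nonneg (H x))) (p - 1)
      positivity
    rw [Real.norm_eq_abs, abs_of_nonneg h1]
    have h2 := aux_sum_rpow hp1 (norm_nonneg (G x)) (norm_nonneg (H x))
    calc bound x ≤ p * (2 ^ p * (‖G x‖ ^ p + ‖H x‖ ^ p)) := by
          exact mul_le_mul_of_nonneg_left h2 (le_of_lt hp0)
      _ = p * 2 ^ p * (‖G x‖ ^ p + ‖H x‖ ^ p) := by ring
  have h_diff : ∀ᵐ x : EuclideanSpace ℝ (Fin n), ∀ t ∈ Metric.ball (0 : ℝ) 1,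
      HasDerivAt (fun t => F t x) (F' t x) t :=
    Filter.Eventually.of_forall fun x t _ => aux_hasDerivAt hp1 (G x) (H x) t
  obtain ⟨hI, hD⟩ := hasDerivAt_integral_of_dominated_loc_of_deriv_le (Metric.ball_mem_nhds 0 zero_lt_one)
    (Filter.Eventually.of_forall hF_meas) hF_int hF'_meas h_bound bound_integrable h_diff
  -- integrability of the target integrand
  have hInt : Integrable (fun x => ‖G x‖ ^ (p - 2) * ⟪G x, H x⟫) := by
    refine (hI.const_mul p⁻¹).congr (Filter.Eventually.of_forall fun x => ?_)
    simp [hF', inv_mul_cancel_left₀ (ne_of_gt hp0)]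
  -- the scalar side
  have hf : HasDerivAt (fun t : ℝ => |A + t * B| ^ p / K)
      (p * (|A| ^ (p - 2) * (A * B)) / K) 0 := by
    have h1 := (aux_hasDerivAt hp1 (E := ℝ) A B 0).div_const K
    have h2 : (fun s : ℝ => ‖A + s • B‖ ^ p / K) = fun s : ℝ => |A + s * B| ^ p / K := by
      funext s
      simp [Real.norm_eq_abs, smul_eq_mul]
    rw [h2] at h1
    refine h1.congr_deriv ?_
    simp [real_inner_comm, RCLike.inner_apply, Real.norm_eq_abs, mul_comm]
  -- the difference function has a local minimum at 0
  set D : ℝ → ℝ := fun t => Cs ^ p * (∫ x, F t x) - |A + t * B| ^ p / K with hDdef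
  have hD0 : D 0 = 0 := by
    have : (∫ x, F 0 x) = ∫ x, ‖G x‖ ^ p := by
      congr 1
      funext x
      simp [hF]
    rw [hDdef]
    simp only [zero_mul, add_zero, this]
    rw [← hmax]
    ring
  have hmin : IsLocalMin D 0 := by
    refine Filter.Eventually.of_forall fun t => ?_
    rw [hD0]
    have := hineq t
    simp only [hDdef]
    exact sub_nonneg.mpr this
  have hD' : HasDerivAt D (Cs ^ p * (∫ x, F' 0 x) - p * (|A| ^ (p - 2) * (A * B)) / K) 0 :=
    (hD.const_mul (Cs ^ p)).sub hf
  have key : Cs ^ p * (∫ x, F' 0 x) - p * (|A| ^ (p - 2) * (A * B)) / K = 0 :=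
    hmin.hasDerivAt_eq_zero hD'
  have hIeq : (∫ x, F' 0 x) = p * ∫ x, ‖G x‖ ^ (p - 2) * ⟪G x, H x⟫ := by
    rw [← integral_const_mul]
    congr 1
    funext x
    simp [hF']
  rw [hIeq] at key
  refine ⟨hInt, ?_⟩
  rw [sub_eq_zero] at key
  have hfinal : p * (Cs ^ p * ∫ x, ‖G x‖ ^ (p - 2) * ⟪G x, H x⟫) =
      p * (|A| ^ (p - 2) * A * B / K) := by
    calc p * (Cs ^ p * ∫ x, ‖G x‖ ^ (p - 2) * ⟪G x, H x⟫)
        = Cs ^ p * (p * ∫ x, ‖G x‖ ^ (p - 2) * ⟪G x, H x⟫) := by ring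
      _ = p * (|A| ^ (p - 2) * (A * B)) / K := key
      _ = p * (|A| ^ (p - 2) * A * B / K) := by ring
  have := mul_left_cancel₀ (ne_of_gt hp0) hfinal
  exact this
end

section
/- Let n ≥ 1, n < p < ∞, c ∈ ℝ, and let x0, y0 ∈ ℝⁿ be distinct. Let u : ℝⁿ → ℝ be differentiable with ∫_{ℝⁿ} ‖∇u‖^p dx < ∞, and suppose u satisfies the weak p-Laplace identity at (x0, y0) with constant c. Then for every differentiable v : ℝⁿ → ℝ with ∫_{ℝⁿ} ‖∇v‖^p dx < ∞, v(x0) = u(x0), and v(y0) = u(y0), one has ∫_{ℝⁿ} ‖∇u‖^p dx ≤ ∫_{ℝⁿ} ‖∇v‖^p dx. -/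
open MeasureTheory RealInnerProductSpace

/-- `u` satisfies the weak p-Laplace identity at the distinct points `x0, y0` with
constant `c`: for every differentiable test function `φ` with `‖∇φ‖^p` integrable,
the integrand `‖∇u‖^(p-2) ⟪∇u, ∇φ⟫` is integrable and its integral equals
`c (φ x0 - φ y0)`. -/
def WeakPLaplace (n : ℕ) (p : ℝ) (u : EuclideanSpace ℝ (Fin n) → ℝ)
    (x0 y0 : EuclideanSpace ℝ (Fin n)) (c : ℝ) : Prop :=
  ∀ φ : EuclideanSpace ℝ (Fin n) → ℝ, Differentiable ℝ φ →
    Integrable (fun x => ‖gradient φ x‖ ^ p) →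
      Integrable (fun x => ‖gradient u x‖ ^ (p - 2) * ⟪gradient u x, gradient φ x⟫) ∧
      ∫ x, ‖gradient u x‖ ^ (p - 2) * ⟪gradient u x, gradient φ x⟫ = c * (φ x0 - φ y0)

/-- A solution of the weak p-Laplace identity at `(x0, y0)` minimizes the p-Dirichlet
energy among all admissible functions with the same values at `x0` and `y0`. -/
theorem weak_pde_implies_minimizer (n : ℕ) (hn : 1 ≤ n) (p : ℝ) (hp : (n : ℝ) < p)
    (c : ℝ) (x0 y0 : EuclideanSpace ℝ (Fin n)) (hxy : x0 ≠ y0)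
    (u : EuclideanSpace ℝ (Fin n) → ℝ) (hu : Differentiable ℝ u)
    (hui : Integrable (fun x => ‖gradient u x‖ ^ p))
    (hweak : WeakPLaplace n p u x0 y0 c) :
    ∀ v : EuclideanSpace ℝ (Fin n) → ℝ, Differentiable ℝ v →
      Integrable (fun x => ‖gradient v x‖ ^ p) →
      v x0 = u x0 → v y0 = u y0 →
      ∫ x, ‖gradient u x‖ ^ p ≤ ∫ x, ‖gradient v x‖ ^ p := by
  intro v hv hvi hvx hvy
  have hp1 : 1 < p := lt_of_le_of_lt (by exact_mod_cast hn) hp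
  have hp0 : 0 < p := lt_trans one_pos hp1
  -- the test function
  set φ : EuclideanSpace ℝ (Fin n) → ℝ := fun x => v x - u x with hφdef
  have hφ : Differentiable ℝ φ := hv.sub hu
  have hgφ : ∀ x, gradient φ x = gradient v x - gradient u x := by
    intro x
    simp only [gradient, hφdef]
    rw [fderiv_fun_sub (hv x) (hu x), map_sub]
  -- integrability of ‖∇φ‖^p
  have mgrad : ∀ (f : EuclideanSpace ℝ (Fin n) → ℝ), Measurable (fun x => gradient f x) := by
    intro f
    exact ((InnerProductSpace.toDual ℝ (EuclideanSpace ℝ (Fin n))).symm.continuous.measurable).comp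
      (measurable_fderiv ℝ f)
  have hφmeas : AEStronglyMeasurable (fun x => ‖gradient φ x‖ ^ p) volume := by
    exact (((mgrad v).sub (mgrad u)).norm.pow_const p).aestronglyMeasurable.congr
      (Filter.Eventually.of_forall fun x => by simp only [hgφ x, Pi.sub_apply])
  have hφi : Integrable (fun x => ‖gradient φ x‖ ^ p) := by
    refine Integrable.mono (((hui.add hvi).const_mul ((2:ℝ) ^ p))) hφmeas
      (Filter.Eventually.of_forall fun x => ?_)
    have h1 : ‖gradient φ x‖ ≤ 2 * max ‖gradient v x‖ ‖gradient u x‖ := by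
      rw [hgφ x]
      calc ‖gradient v x - gradient u x‖ ≤ ‖gradient v x‖ + ‖gradient u x‖ := norm_sub_le _ _
        _ ≤ 2 * max ‖gradient v x‖ ‖gradient u x‖ := by
            rw [two_mul]
            exact add_le_add (le_max_left _ _) (le_max_right _ _)
    have h2 : ‖gradient φ x‖ ^ p ≤ (2 * max ‖gradient v x‖ ‖gradient u x‖) ^ p :=
      Real.rpow_le_rpow (norm_nonneg _) h1 hp0.le
    have h3 : (2 * max ‖gradient v x‖ ‖gradient u x‖) ^ p
        ≤ 2 ^ p * (‖gradient u x‖ ^ p + ‖gradient v x‖ ^ p) := by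
      rw [Real.mul_rpow (by norm_num) (le_max_iff.mpr (Or.inl (norm_nonneg _)))]
      refine mul_le_mul_of_nonneg_left ?_ (Real.rpow_nonneg (by norm_num) p)
      rcases max_cases ‖gradient v x‖ ‖gradient u x‖ with ⟨h, _⟩ | ⟨h, _⟩ <;> rw [h]
      · exact le_add_of_nonneg_left (Real.rpow_nonneg (norm_nonneg _) p)
      · exact le_add_of_nonneg_right (Real.rpow_nonneg (norm_nonneg _) p)
    simp only [Pi.add_apply]
    rw [Real.norm_of_nonneg (Real.rpow_nonneg (norm_nonneg _) p), Real.norm_of_nonneg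
      (mul_nonneg (Real.rpow_nonneg (by norm_num) p) (add_nonneg
        (Real.rpow_nonneg (norm_nonneg _) p) (Real.rpow_nonneg (norm_nonneg _) p)))]
    exact h2.trans h3
  obtain ⟨hint, heq⟩ := hweak φ hφ hφi
  have heq0 : ∫ x, ‖gradient u x‖ ^ (p - 2) * ⟪gradient u x, gradient φ x⟫ = 0 := by
    rw [heq]; simp [hφdef, hvx, hvy]
  -- pointwise identity: ‖g‖^(p-2) * ⟪g, g⟫ = ‖g‖^p
  have self_eq : ∀ g : EuclideanSpace ℝ (Fin n), ‖g‖ ^ (p - 2) * ⟪g, g⟫ = ‖g‖ ^ p := by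
    intro g
    rcases eq_or_ne g 0 with rfl | hg
    · simp [Real.zero_rpow hp0.ne']
    · have hgn : (0:ℝ) < ‖g‖ := norm_pos_iff.mpr hg
      rw [real_inner_self_eq_norm_sq, ← Real.rpow_natCast ‖g‖ 2, ← Real.rpow_add hgn]
      norm_num
  -- the key decomposition
  have hdecomp : ∀ x, ‖gradient u x‖ ^ (p - 2) * ⟪gradient u x, gradient v x⟫
      = ‖gradient u x‖ ^ (p - 2) * ⟪gradient u x, gradient φ x⟫ + ‖gradient u x‖ ^ p := by
    intro x
    rw [hgφ x, inner_sub_right, ← self_eq (gradient u x)]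
    ring
  have hIntv : Integrable (fun x => ‖gradient u x‖ ^ (p - 2) * ⟪gradient u x, gradient v x⟫) :=
    (hint.add hui).congr (Filter.Eventually.of_forall fun x => (hdecomp x).symm)
  have hIv : ∫ x, ‖gradient u x‖ ^ (p - 2) * ⟪gradient u x, gradient v x⟫
      = ∫ x, ‖gradient u x‖ ^ p := by
    calc ∫ x, ‖gradient u x‖ ^ (p - 2) * ⟪gradient u x, gradient v x⟫
        = ∫ x, (‖gradient u x‖ ^ (p - 2) * ⟪gradient u x, gradient φ x⟫ + ‖gradient u x‖ ^ p) :=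
          integral_congr_ae (Filter.Eventually.of_forall hdecomp)
      _ = (∫ x, ‖gradient u x‖ ^ (p - 2) * ⟪gradient u x, gradient φ x⟫)
            + ∫ x, ‖gradient u x‖ ^ p := integral_add hint hui
      _ = ∫ x, ‖gradient u x‖ ^ p := by rw [heq0, zero_add]
  -- Young's inequality pointwise bound
  set q : ℝ := p / (p - 1) with hqdef
  have hqp : q.HolderConjugate p := by simpa [Real.conjExponent, hqdef] using (Real.HolderConjugate.conjExponent hp1).symm
  have hbound : ∀ x, ‖gradient u x‖ ^ (p - 2) * ⟪gradient u x, gradient v x⟫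
      ≤ ‖gradient u x‖ ^ p / q + ‖gradient v x‖ ^ p / p := by
    intro x
    have h1 : ‖gradient u x‖ ^ (p - 2) * ⟪gradient u x, gradient v x⟫
        ≤ ‖gradient u x‖ ^ (p - 1) * ‖gradient v x‖ := by
      have hinner : ⟪gradient u x, gradient v x⟫ ≤ ‖gradient u x‖ * ‖gradient v x‖ :=
        real_inner_le_norm _ _
      have h2 : ‖gradient u x‖ ^ (p - 2) * ‖gradient u x‖ = ‖gradient u x‖ ^ (p - 1) := by
        rcases eq_or_ne (gradient u x) 0 with h | h
        · simp [h, Real.zero_rpow (by intro h'; linarith [sub_eq_zero.mp h'] : p - 1 ≠ 0)]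
        · have hgn : (0:ℝ) < ‖gradient u x‖ := norm_pos_iff.mpr h
          nth_rewrite 2 [← Real.rpow_one ‖gradient u x‖]
          rw [← Real.rpow_add hgn]; ring_nf
      calc ‖gradient u x‖ ^ (p - 2) * ⟪gradient u x, gradient v x⟫
          ≤ ‖gradient u x‖ ^ (p - 2) * (‖gradient u x‖ * ‖gradient v x‖) :=
            mul_le_mul_of_nonneg_left hinner (Real.rpow_nonneg (norm_nonneg _) _)
        _ = ‖gradient u x‖ ^ (p - 1) * ‖gradient v x‖ := by rw [← mul_assoc, h2]
    have h3 : ‖gradient u x‖ ^ (p - 1) * ‖gradient v x‖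
        ≤ (‖gradient u x‖ ^ (p - 1)) ^ q / q + ‖gradient v x‖ ^ p / p :=
      Real.young_inequality_of_nonneg (Real.rpow_nonneg (norm_nonneg _) _) (norm_nonneg _) hqp
    have h4 : (‖gradient u x‖ ^ (p - 1)) ^ q = ‖gradient u x‖ ^ p := by
      rw [← Real.rpow_mul (norm_nonneg _)]
      congr 1
      exact hqp.symm.sub_one_mul_conj
    linarith [h1, h3, h4 ▸ h3]
  -- integrate the bound
  have hint_bound : Integrable (fun x => ‖gradient u x‖ ^ p / q + ‖gradient v x‖ ^ p / p) :=
    (hui.div_const q).add (hvi.div_const p)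
  have hmono : ∫ x, ‖gradient u x‖ ^ (p - 2) * ⟪gradient u x, gradient v x⟫
      ≤ ∫ x, (‖gradient u x‖ ^ p / q + ‖gradient v x‖ ^ p / p) :=
    integral_mono hIntv hint_bound hbound
  rw [hIv] at hmono
  rw [integral_add (hui.div_const q) (hvi.div_const p), integral_div, integral_div] at hmono
  set I := ∫ x, ‖gradient u x‖ ^ p
  set J := ∫ x, ‖gradient v x‖ ^ p
  have hq1 : 1 / q = 1 - 1 / p := by
    rw [hqdef]
    field_simp
  have hIq : I / q = I * (1 - 1 / p) := by
    rw [div_eq_mul_one_div, hq1]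
  rw [hIq] at hmono
  have : I * (1 / p) ≤ J * (1 / p) := by
    have := hmono
    rw [div_eq_mul_one_div J p] at this
    nlinarith
  have hpinv : (0:ℝ) < 1 / p := by positivity
  exact le_of_mul_le_mul_right (by simpa [mul_comm] using this) hpinv
end

section
/- Let n ≥ 1, n < p < ∞, and let x0, y0 ∈ ℝⁿ be distinct. Let u, v : ℝⁿ → ℝ be differentiable with ∫_{ℝⁿ} ‖∇u‖^p dx < ∞ and ∫_{ℝⁿ} ‖∇v‖^p dx < ∞, and suppose there exist constants c_u, c_v ∈ ℝ such that u satisfies the weak p-Laplace identity at (x0, y0) with constant c_u and v satisfies the weak p-Laplace identity at (x0, y0) with constant c_v. If u(x0) = v(x0) and u(y0) = v(y0), then u(x) = v(x) for all x ∈ ℝⁿ. -/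
open MeasureTheory RealInnerProductSpace Set

lemma key_pos {F : Type*} [NormedAddCommGroup F] [InnerProductSpace ℝ F] {p : ℝ} (hp : 1 < p)
    {a b : F} (hab : a ≠ b) :
    0 < ‖a‖ ^ (p-2) * ⟪a, a - b⟫ - ‖b‖ ^ (p-2) * ⟪b, a - b⟫ := by
  have e1 : ⟪a, a - b⟫ = ‖a‖^2 - ⟪a, b⟫ := by
    rw [inner_sub_right, real_inner_self_eq_norm_sq]
  have e2 : ⟪b, a - b⟫ = ⟪a, b⟫ - ‖b‖^2 := by
    rw [inner_sub_right, real_inner_self_eq_norm_sq, real_inner_comm]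
  rw [e1, e2]
  by_cases ha : a = 0
  · have hb : b ≠ 0 := fun h => hab (by rw [ha, h])
    have hB : 0 < ‖b‖ := norm_pos_iff.2 hb
    have hI : ⟪a, b⟫ = 0 := by rw [ha, inner_zero_left]
    rw [hI, ha]
    simp only [norm_zero]
    rw [show ((0:ℝ)^2 - (0:ℝ)) = 0 from by ring, mul_zero]
    have := Real.rpow_pos_of_pos hB (p-2)
    nlinarith [mul_pos this (mul_pos hB hB)]
  by_cases hb : b = 0
  · have hA : 0 < ‖a‖ := norm_pos_iff.2 ha
    have hI : ⟪a, b⟫ = 0 := by rw [hb, inner_zero_right]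
    rw [hI, hb]
    simp only [norm_zero]
    rw [show ((0:ℝ) - (0:ℝ)^2) = 0 from by ring, mul_zero]
    have := Real.rpow_pos_of_pos hA (p-2)
    nlinarith [mul_pos this (mul_pos hA hA)]
  · have hA : 0 < ‖a‖ := norm_pos_iff.2 ha
    have hB : 0 < ‖b‖ := norm_pos_iff.2 hb
    have hApos := Real.rpow_pos_of_pos hA (p-2)
    have hBpos := Real.rpow_pos_of_pos hB (p-2)
    by_cases hAB : ‖a‖ = ‖b‖
    · have hd : (0:ℝ) < ‖a - b‖^2 := by
        have : a - b ≠ 0 := sub_ne_zero.2 hab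
        exact pow_pos (norm_pos_iff.2 this) 2
      have hns : ‖a - b‖^2 = ‖a‖^2 - 2*⟪a,b⟫ + ‖b‖^2 := norm_sub_sq_real a b
      rw [hAB] at hns ⊢
      have h3 : ‖b‖^(p-2) * ‖a-b‖^2 = ‖b‖^(p-2)*(‖b‖^2 - 2*⟪a,b⟫ + ‖b‖^2) := by rw [hns]
      nlinarith [mul_pos hBpos hd, h3]
    · have hI : ⟪a, b⟫ ≤ ‖a‖ * ‖b‖ := real_inner_le_norm a b
      have hApow : ‖a‖^(p-2) * ‖a‖^2 = ‖a‖^p := by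
        rw [← Real.rpow_natCast ‖a‖ 2, ← Real.rpow_add hA]; norm_num
      have hBpow : ‖b‖^(p-2) * ‖b‖^2 = ‖b‖^p := by
        rw [← Real.rpow_natCast ‖b‖ 2, ← Real.rpow_add hB]; norm_num
      have hA1 : ‖a‖^(p-2) * ‖a‖ = ‖a‖^(p-1) := by
        nth_rewrite 2 [← Real.rpow_one ‖a‖]
        rw [← Real.rpow_add hA]; ring_nf
      have hB1 : ‖b‖^(p-2) * ‖b‖ = ‖b‖^(p-1) := by
        nth_rewrite 2 [← Real.rpow_one ‖b‖]
        rw [← Real.rpow_add hB]; ring_nf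
      have hA2 : ‖a‖^(p-1) * ‖a‖ = ‖a‖^p := by
        nth_rewrite 2 [← Real.rpow_one ‖a‖]
        rw [← Real.rpow_add hA]; ring_nf
      have hB2 : ‖b‖^(p-1) * ‖b‖ = ‖b‖^p := by
        nth_rewrite 2 [← Real.rpow_one ‖b‖]
        rw [← Real.rpow_add hB]; ring_nf
      have hcoef : 0 ≤ (‖a‖^(p-2) + ‖b‖^(p-2)) * (‖a‖*‖b‖ - ⟪a,b⟫) :=
        mul_nonneg (by positivity) (by linarith)
      rcases lt_or_gt_of_ne hAB with h | h
      · have hlt : ‖a‖^(p-1) < ‖b‖^(p-1) :=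
          Real.rpow_lt_rpow (norm_nonneg a) h (by linarith)
        nlinarith [mul_pos (sub_pos.2 hlt) (sub_pos.2 h)]
      · have hlt : ‖b‖^(p-1) < ‖a‖^(p-1) :=
          Real.rpow_lt_rpow (norm_nonneg b) h (by linarith)
        nlinarith [mul_pos (sub_pos.2 hlt) (sub_pos.2 h)]

/-- FTC along a segment: if the derivative of `w` vanishes a.e. on the segment from `z` to `x`,
then `w x = w z`. -/
lemma seg_const {n : ℕ} {w : EuclideanSpace ℝ (Fin n) → ℝ} (hw : Differentiable ℝ w)
    (z x : EuclideanSpace ℝ (Fin n))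
    (h : ∀ᵐ t : ℝ, fderiv ℝ w (z + t • (x - z)) = 0) : w x = w z := by
  set g' : ℝ → ℝ := fun t => fderiv ℝ w (z + t • (x - z)) (x - z) with hg'
  have hderiv : ∀ t ∈ uIcc (0:ℝ) 1, HasDerivAt (fun t : ℝ => w (z + t • (x - z))) (g' t) t := by
    intro t _
    have hL : HasDerivAt (fun t : ℝ => z + t • (x - z)) (x - z) t := by
      simpa using ((hasDerivAt_id t).smul_const (x - z)).const_add z
    exact (hw.differentiableAt.hasFDerivAt).comp_hasDerivAt t hL
  have hzero : ∀ᵐ t : ℝ, g' t = 0 := by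
    filter_upwards [h] with t ht
    simp [hg', ht]
  have hint : IntervalIntegrable g' volume 0 1 := by
    rw [intervalIntegrable_iff]
    exact (integrable_zero _ _ _).congr
      ((ae_restrict_of_ae hzero).mono fun t ht => ht.symm)
  have := intervalIntegral.integral_eq_sub_of_hasDerivAt hderiv hint
  have hz : ∫ t in (0:ℝ)..1, g' t = ∫ t in (0:ℝ)..1, (0:ℝ) := by
    apply intervalIntegral.integral_congr_ae
    filter_upwards [hzero] with t ht _
    exact ht
  rw [hz] at this
  simp at this
  linarith

lemma affine_preimage_null {n : ℕ} {c : ℝ} (hc : c ≠ 0) (q : EuclideanSpace ℝ (Fin n))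
    {s : Set (EuclideanSpace ℝ (Fin n))} (hs : volume s = 0) :
    volume ((fun z : EuclideanSpace ℝ (Fin n) => c • z + q) ⁻¹' s) = 0 := by
  have hdecomp : (fun z : EuclideanSpace ℝ (Fin n) => c • z + q) ⁻¹' s
      = (c • ·) ⁻¹' ((fun y => q + y) ⁻¹' s) := by
    ext z; simp [add_comm]
  rw [hdecomp]
  have htrans : volume ((fun y : EuclideanSpace ℝ (Fin n) => q + y) ⁻¹' s) = 0 := by
    rw [measure_preimage_add]; exact hs
  rw [Measure.addHaar_preimage_smul volume hc, htrans, mul_zero]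

lemma fubini_segments {n : ℕ} (q : EuclideanSpace ℝ (Fin n)) {S : Set (EuclideanSpace ℝ (Fin n))}
    (hSm : MeasurableSet S) (hS0 : volume S = 0) :
    ∀ᵐ z : EuclideanSpace ℝ (Fin n), ∀ᵐ t : ℝ, z + t • (q - z) ∉ S := by
  set T' : Set (ℝ × EuclideanSpace ℝ (Fin n)) :=
    (fun tz : ℝ × EuclideanSpace ℝ (Fin n) => tz.2 + tz.1 • (q - tz.2)) ⁻¹' S with hT'def
  have hcont' : Continuous (fun tz : ℝ × EuclideanSpace ℝ (Fin n) => tz.2 + tz.1 • (q - tz.2)) :=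
    continuous_snd.add (continuous_fst.smul (continuous_const.sub continuous_snd))
  have hT'm : MeasurableSet T' := hcont'.measurable hSm
  set T : Set (EuclideanSpace ℝ (Fin n) × ℝ) :=
    (fun zt : EuclideanSpace ℝ (Fin n) × ℝ => zt.1 + zt.2 • (q - zt.1)) ⁻¹' S with hTdef
  have hTm : MeasurableSet T :=
    (continuous_fst.add (continuous_snd.smul (continuous_const.sub continuous_fst))).measurable hSm
  have hT' : (volume.prod volume : Measure (ℝ × EuclideanSpace ℝ (Fin n))) T' = 0 := by
    rw [Measure.measure_prod_null hT'm]
    have hne : ∀ᵐ t : ℝ, t ≠ 1 := by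
      rw [ae_iff]
      convert Real.volume_singleton (a := 1) using 2
      ext t; simp
    filter_upwards [hne] with t ht
    have hpre : Prod.mk t ⁻¹' T' = (fun z => (1 - t) • z + t • q) ⁻¹' S := by
      ext z
      have : z + t • (q - z) = (1 - t) • z + t • q := by
        rw [smul_sub, sub_smul, one_smul]; abel
      simp [hT'def, this]
    rw [hpre]
    exact affine_preimage_null (sub_ne_zero.2 (Ne.symm ht)) _ hS0
  have hswapT : Prod.swap ⁻¹' T = T' := by ext tz; simp [hTdef, hT'def]
  have hT : (volume.prod volume : Measure (EuclideanSpace ℝ (Fin n) × ℝ)) T = 0 := by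
    rw [← Measure.prod_swap, Measure.map_apply measurable_swap hTm, hswapT]
    exact hT'
  have := Measure.measure_ae_null_of_prod_null hT
  filter_upwards [this] with z hz
  have : volume {t : ℝ | z + t • (q - z) ∈ S} = 0 := hz
  rw [ae_iff]
  convert this using 2
  ext t; simp

/-- Uniqueness: two solutions of the weak p-Laplace identity at the same pair of points
which agree at those points agree everywhere. -/
theorem weak_pde_uniqueness (n : ℕ) (hn : 1 ≤ n) (p : ℝ) (hp : (n : ℝ) < p)
    (x0 y0 : EuclideanSpace ℝ (Fin n)) (hxy : x0 ≠ y0)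
    (u v : EuclideanSpace ℝ (Fin n) → ℝ)
    (hu : Differentiable ℝ u) (hv : Differentiable ℝ v)
    (hui : Integrable (fun x => ‖gradient u x‖ ^ p))
    (hvi : Integrable (fun x => ‖gradient v x‖ ^ p))
    (cu cv : ℝ)
    (hwu : WeakPLaplace n p u x0 y0 cu)
    (hwv : WeakPLaplace n p v x0 y0 cv)
    (h0 : u x0 = v x0) (h1 : u y0 = v y0) :
    ∀ x, u x = v x := by
  have hp1 : 1 < p := lt_of_le_of_lt (by exact_mod_cast hn) hp
  have hp0 : 0 < p := by linarith
  set w : EuclideanSpace ℝ (Fin n) → ℝ := fun x => u x - v x with hwdef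
  have hw : Differentiable ℝ w := hu.sub hv
  have hgw : ∀ x, gradient w x = gradient u x - gradient v x := by
    intro x
    show (InnerProductSpace.toDual ℝ _).symm (fderiv ℝ w x) = _
    rw [show fderiv ℝ w x = fderiv ℝ (fun y => u y - v y) x from rfl,
      fderiv_fun_sub (hu x) (hv x), map_sub]
    rfl
  -- measurability of gradients
  have hgm : ∀ f : EuclideanSpace ℝ (Fin n) → ℝ, Measurable (fun x => gradient f x) := by
    intro f
    exact ((InnerProductSpace.toDual ℝ _).symm.continuous.measurable).comp
      (measurable_fderiv ℝ f)
  -- integrability of ‖∇w‖^p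
  have hpow2 : ∀ a b : ℝ, 0 ≤ a → 0 ≤ b → (a + b) ^ p ≤ 2 ^ p * (a ^ p + b ^ p) := by
    intro a b ha hb
    have h1 : (a + b) ^ p ≤ (2 * max a b) ^ p :=
      Real.rpow_le_rpow (by positivity) (by rcases max_cases a b with ⟨h, _⟩ | ⟨h, _⟩ <;>
        rw [h] <;> linarith) hp0.le
    have h2 : (2 * max a b) ^ p = 2 ^ p * (max a b) ^ p :=
      Real.mul_rpow (by norm_num) (le_max_iff.2 (Or.inl ha))
    have h3 : (max a b) ^ p ≤ a ^ p + b ^ p := by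
      rcases max_cases a b with ⟨h, _⟩ | ⟨h, _⟩ <;> rw [h]
      · linarith [Real.rpow_nonneg hb p]
      · linarith [Real.rpow_nonneg ha p]
    calc (a + b) ^ p ≤ 2 ^ p * (max a b) ^ p := by rw [← h2]; exact h1
    _ ≤ 2 ^ p * (a ^ p + b ^ p) := by nlinarith [Real.rpow_pos_of_pos (show (0:ℝ) < 2 by norm_num) p]
  have hwint : Integrable (fun x => ‖gradient w x‖ ^ p) := by
    have hb : ∀ x, ‖gradient w x‖ ^ p ≤ 2 ^ p * (‖gradient u x‖ ^ p + ‖gradient v x‖ ^ p) := by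
      intro x
      calc ‖gradient w x‖ ^ p ≤ (‖gradient u x‖ + ‖gradient v x‖) ^ p :=
        Real.rpow_le_rpow (norm_nonneg _) (by rw [hgw x]; exact norm_sub_le _ _) hp0.le
      _ ≤ _ := hpow2 _ _ (norm_nonneg _) (norm_nonneg _)
    refine ((hui.add hvi).const_mul (2 ^ p)).mono' ?_ ?_
    · exact (((Real.continuous_rpow_const hp0.le).measurable).comp ((hgm w).norm)).aestronglyMeasurable
    · refine ae_of_all _ fun x => ?_
      rw [Real.norm_eq_abs, abs_of_nonneg (Real.rpow_nonneg (norm_nonneg _) _)]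
      exact hb x
  -- apply the weak identities with test function w
  obtain ⟨hfint, hfeq⟩ := hwu w hw hwint
  obtain ⟨hgint, hgeq⟩ := hwv w hw hwint
  have hw0 : w x0 = 0 := by simp [hwdef, h0]
  have hw1 : w y0 = 0 := by simp [hwdef, h1]
  rw [hw0, hw1, sub_zero, mul_zero] at hfeq hgeq
  set F : EuclideanSpace ℝ (Fin n) → ℝ := fun x =>
    ‖gradient u x‖ ^ (p - 2) * ⟪gradient u x, gradient w x⟫ -
      ‖gradient v x‖ ^ (p - 2) * ⟪gradient v x, gradient w x⟫ with hFdef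
  have hFint : Integrable F := hfint.sub hgint
  have hFzero : ∫ x, F x = 0 := by
    rw [integral_sub hfint hgint, hfeq, hgeq, sub_zero]
  have hFnonneg : 0 ≤ F := by
    intro x
    simp only [hFdef, Pi.zero_apply]
    rw [hgw x]
    rcases eq_or_ne (gradient u x) (gradient v x) with he | hne
    · rw [he]; simp
    · exact (key_pos hp1 hne).le
  have hae0 : F =ᵐ[volume] 0 := (integral_eq_zero_iff_of_nonneg hFnonneg hFint).mp hFzero
  have haegrad : ∀ᵐ x, gradient w x = 0 := by
    filter_upwards [hae0] with x hx
    rw [hgw x, sub_eq_zero]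
    by_contra hne
    have hpos := key_pos hp1 hne
    simp only [hFdef, Pi.zero_apply] at hx
    rw [hgw x] at hx
    linarith
  rw [ae_iff] at haegrad
  obtain ⟨S', hsub', hS'm, hS'0⟩ := exists_measurable_superset_of_null haegrad
  have hout : ∀ y ∉ S', fderiv ℝ w y = 0 := by
    intro y hy
    have hgy : gradient w y = 0 := by
      by_contra hne
      exact hy (hsub' hne)
    have h2 : fderiv ℝ w y = (InnerProductSpace.toDual ℝ _) (gradient w y) :=
      ((InnerProductSpace.toDual ℝ _).apply_symm_apply _).symm
    rw [h2, hgy, map_zero]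
  intro x
  have S1 := fubini_segments x hS'm hS'0
  have S2 := fubini_segments x0 hS'm hS'0
  obtain ⟨z, hz1, hz2⟩ := (S1.and S2).exists
  have e1 : w x = w z := seg_const hw z x (by filter_upwards [hz1] with t ht; exact hout _ ht)
  have e2 : w x0 = w z := seg_const hw z x0 (by filter_upwards [hz2] with t ht; exact hout _ ht)
  have : w x = 0 := by rw [e1, ← e2, hw0]
  simpa [hwdef, sub_eq_zero] using this
end

section
/- (Finite Chain Lemma) Let n ≥ 2, R > 0, and let x, y ∈ ℝⁿ with ‖x‖ ≥ 2R and ‖y‖ ≥ 2R. Then there exist m ∈ {1, …, 8} and points z_1, …, z_m ∈ ℝⁿ with ‖z_i‖ ≥ 2R for each i, such that, writing w_0 = x, w_i = z_i for 1 ≤ i ≤ m, and w_{m+1} = y: (1) ‖w_i − w_{i+1}‖ ≤ ‖x − y‖ for every 0 ≤ i ≤ m; and (2) for every 0 ≤ i ≤ m, the open ball of radius ‖w_i − w_{i+1}‖/2 centered at (w_i + w_{i+1})/2 is contained in ℝⁿ \ B_R(0), where B_R(0) is the open ball of radius R centered at the origin. -/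
open scoped RealInnerProductSpace

private lemma aux_ball_subset {E : Type*} [NormedAddCommGroup E] [InnerProductSpace ℝ E]
    {R : ℝ} (a b : E) (h : ‖a - b‖ + 2 * R ≤ ‖a + b‖) :
    Metric.ball (((1:ℝ)/2) • (a + b)) (‖a - b‖ / 2) ⊆ (Metric.ball (0 : E) R)ᶜ := by
  intro z hz
  simp only [Metric.mem_ball, Set.mem_compl_iff, not_lt, dist_zero_right, dist_eq_norm, sub_zero] at *
  have h2 : ‖((1:ℝ)/2) • (a + b)‖ = ‖a + b‖ / 2 := by
    rw [norm_smul]; simp [abs_of_nonneg]; ring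
  have h1 : ‖((1:ℝ)/2) • (a + b)‖ ≤ ‖z‖ + ‖z - ((1:ℝ)/2) • (a + b)‖ := by
    have h3 := norm_add_le z (((1:ℝ)/2) • (a + b) - z)
    have h4 : ‖((1:ℝ)/2) • (a + b) - z‖ = ‖z - ((1:ℝ)/2) • (a + b)‖ := norm_sub_rev _ _
    rw [add_sub_cancel] at h3
    linarith
  linarith

private lemma aux_norm_combo {E : Type*} [NormedAddCommGroup E] [InnerProductSpace ℝ E]
    {e1 e2 : E} (h1 : ‖e1‖ = 1) (h2 : ‖e2‖ = 1) (h12 : ⟪e1, e2⟫ = 0) (a b : ℝ) :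
    ‖a • e1 + b • e2‖ ^ 2 = a ^ 2 + b ^ 2 := by
  have hce : ⟪e2, e1⟫ = (0:ℝ) := by rw [real_inner_comm]; exact h12
  have ha : ‖a • e1‖ ^ 2 = a ^ 2 := by rw [norm_smul, h1]; simp [mul_pow, sq_abs]
  have hb : ‖b • e2‖ ^ 2 = b ^ 2 := by rw [norm_smul, h2]; simp [mul_pow, sq_abs]
  rw [← real_inner_self_eq_norm_sq]
  simp only [inner_add_add_self, real_inner_smul_left, real_inner_smul_right, h12, hce,
    real_inner_self_eq_norm_sq]
  rw [ha, hb]; ring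

private lemma aux_exists_orth {n : ℕ} (hn : 2 ≤ n) (e1 : EuclideanSpace ℝ (Fin n)) :
    ∃ e2 : EuclideanSpace ℝ (Fin n), ‖e2‖ = 1 ∧ ⟪e1, e2⟫ = 0 := by
  have hne : (ℝ ∙ e1)ᗮ ≠ ⊥ := by
    intro hbot
    have htop : (ℝ ∙ e1) = ⊤ := Submodule.orthogonal_eq_bot_iff.mp hbot
    have h1 : Module.finrank ℝ (EuclideanSpace ℝ (Fin n)) ≤ 1 := by
      rw [← finrank_top ℝ (EuclideanSpace ℝ (Fin n)), ← htop]
      exact (finrank_span_le_card ({e1} : Set (EuclideanSpace ℝ (Fin n)))).trans (by simp)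
    rw [finrank_euclideanSpace_fin] at h1
    omega
  obtain ⟨v, hv, hv0⟩ := Submodule.exists_mem_ne_zero_of_ne_bot hne
  refine ⟨‖v‖⁻¹ • v, norm_smul_inv_norm hv0, ?_⟩
  rw [real_inner_smul_right]
  rw [hv e1 (Submodule.mem_span_singleton_self e1), mul_zero]


private lemma aux_sqrt2 : (1.4:ℝ) ≤ Real.sqrt 2 ∧ Real.sqrt 2 ≤ (1.5:ℝ) := by
  constructor <;> nlinarith [Real.sq_sqrt (by norm_num : (0:ℝ) ≤ 2), Real.sqrt_nonneg 2]

private lemma aux_combo_sub {E : Type*} [NormedAddCommGroup E] [InnerProductSpace ℝ E]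
    {e1 e2 : E} (h1 : ‖e1‖ = 1) (h2 : ‖e2‖ = 1) (h12 : ⟪e1, e2⟫ = 0) (L a b : ℝ) :
    ‖((L * Real.cos a) • e1 + (L * Real.sin a) • e2) -
      ((L * Real.cos b) • e1 + (L * Real.sin b) • e2)‖ ^ 2
      = 2 * L ^ 2 * (1 - Real.cos (a - b)) := by
  have hv : ((L * Real.cos a) • e1 + (L * Real.sin a) • e2) -
      ((L * Real.cos b) • e1 + (L * Real.sin b) • e2)
      = (L * Real.cos a - L * Real.cos b) • e1 + (L * Real.sin a - L * Real.sin b) • e2 := by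
    module
  rw [hv, aux_norm_combo h1 h2 h12, Real.cos_sub]
  nlinarith [Real.sin_sq_add_cos_sq a, Real.sin_sq_add_cos_sq b]

private lemma aux_combo_add {E : Type*} [NormedAddCommGroup E] [InnerProductSpace ℝ E]
    {e1 e2 : E} (h1 : ‖e1‖ = 1) (h2 : ‖e2‖ = 1) (h12 : ⟪e1, e2⟫ = 0) (L a b : ℝ) :
    ‖((L * Real.cos a) • e1 + (L * Real.sin a) • e2) +
      ((L * Real.cos b) • e1 + (L * Real.sin b) • e2)‖ ^ 2
      = 2 * L ^ 2 * (1 + Real.cos (a - b)) := by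
  have hv : ((L * Real.cos a) • e1 + (L * Real.sin a) • e2) +
      ((L * Real.cos b) • e1 + (L * Real.sin b) • e2)
      = (L * Real.cos a + L * Real.cos b) • e1 + (L * Real.sin a + L * Real.sin b) • e2 := by
    module
  rw [hv, aux_norm_combo h1 h2 h12, Real.cos_sub]
  nlinarith [Real.sin_sq_add_cos_sq a, Real.sin_sq_add_cos_sq b]

private lemma aux_step (R L D S c : ℝ) (hR : 0 < R) (hL : 2*R ≤ L)
    (hc : Real.sqrt 2 / 2 ≤ c) (hc1 : c ≤ 1) (hD : 0 ≤ D) (hS : 0 ≤ S)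
    (hD2 : D^2 = 2*L^2*(1-c)) (hS2 : S^2 = 2*L^2*(1+c)) : D + 2*R ≤ S := by
  obtain ⟨hs1, hs2⟩ := aux_sqrt2
  have hc7 : (0.7:ℝ) ≤ c := by linarith
  have hL0 : (0:ℝ) < L := by linarith
  have hb : 0 ≤ L*(4*c-1) := by nlinarith
  have key : 2*D ≤ L*(4*c-1) := by
    have hsq : (2*D)^2 ≤ (L*(4*c-1))^2 := by
      have h16 : (0:ℝ) ≤ 16*c^2-7 := by nlinarith
      nlinarith [mul_nonneg (sq_nonneg L) h16]
    exact le_of_pow_le_pow_left₀ two_ne_zero hb hsq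
  have hSDL : D + L ≤ S := by
    have hsq : (D+L)^2 ≤ S^2 := by
      have := mul_nonneg hL0.le (show (0:ℝ) ≤ L*(4*c-1) - 2*D by linarith)
      nlinarith
    exact le_of_pow_le_pow_left₀ two_ne_zero hS hsq
  linarith

private lemma aux_gap (L D U c : ℝ) (hL : 0 < L)
    (hc : Real.sqrt 2 / 2 ≤ c) (hc1 : c ≤ 1) (hD : 0 ≤ D) (hU : 0 ≤ U)
    (hD2 : D^2 = 2*L^2*(1-c)) (hU2 : U^2 = 2*L^2*(1 - (8*c^4 - 8*c^2 + 1))) : 2*D ≤ U := by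
  obtain ⟨hs1, hs2⟩ := aux_sqrt2
  have hc7 : (0.7:ℝ) ≤ c := by linarith
  have h4 : (2*D)^2 ≤ U^2 := by
    have h1 : (0:ℝ) ≤ 2*c^2*(1+c) - 1 := by nlinarith
    have h2 : (0:ℝ) ≤ 8*L^2*(1-c) := by nlinarith [sq_nonneg L]
    nlinarith [mul_nonneg h2 h1]
  exact le_of_pow_le_pow_left₀ two_ne_zero hU h4



private lemma aux_decomp {n : ℕ} (hn : 2 ≤ n) (x y : EuclideanSpace ℝ (Fin n))
    (hx : x ≠ 0) (hy : y ≠ 0) :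
    ∃ (e1 e2 : EuclideanSpace ℝ (Fin n)) (θ : ℝ),
      ‖e1‖ = 1 ∧ ‖e2‖ = 1 ∧ ⟪e1, e2⟫ = 0 ∧ 0 ≤ θ ∧ θ ≤ Real.pi ∧
      ‖x‖⁻¹ • x = e1 ∧
      ‖y‖⁻¹ • y = Real.cos θ • e1 + Real.sin θ • e2 := by
  set e1 : EuclideanSpace ℝ (Fin n) := ‖x‖⁻¹ • x with he1def
  have he1 : ‖e1‖ = 1 := norm_smul_inv_norm hx
  set u : EuclideanSpace ℝ (Fin n) := ‖y‖⁻¹ • y with hudef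
  have hu : ‖u‖ = 1 := norm_smul_inv_norm hy
  set c : ℝ := ⟪e1, u⟫ with hcdef
  have hc1 : |c| ≤ 1 := by
    simpa [he1, hu] using abs_real_inner_le_norm e1 u
  have hcl : -1 ≤ c := by rw [abs_le] at hc1; exact hc1.1
  have hcu : c ≤ 1 := by rw [abs_le] at hc1; exact hc1.2
  set θ : ℝ := Real.arccos c with hθdef
  have hcos : Real.cos θ = c := Real.cos_arccos hcl hcu
  have hsin : Real.sin θ = Real.sqrt (1 - c^2) := by
    rw [hθdef, Real.sin_arccos]
  set v' : EuclideanSpace ℝ (Fin n) := u - c • e1 with hv'def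
  have h1 : ⟪u, c • e1⟫ = c * c := by
    rw [real_inner_smul_right, real_inner_comm, ← hcdef]
  have hv'sq : ‖v'‖^2 = 1 - c^2 := by
    rw [hv'def, @norm_sub_sq_real, h1, hu, norm_smul c e1, he1, Real.norm_eq_abs]
    simp [sq_abs]
    ring
  by_cases hv0 : v' = 0
  · obtain ⟨e2, he2, horth⟩ := aux_exists_orth hn e1
    refine ⟨e1, e2, θ, he1, he2, horth, Real.arccos_nonneg c, Real.arccos_le_pi c, rfl, ?_⟩
    have hc2 : c^2 = 1 := by
      have : (0:ℝ) = 1 - c^2 := by rw [← hv'sq, hv0]; simp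
      linarith
    have hs0 : Real.sin θ = 0 := by rw [hsin, hc2]; simp
    have hueq : u = c • e1 := by
      have := hv'def ▸ hv0
      rwa [sub_eq_zero] at this
    rw [hs0, hcos, zero_smul, add_zero]
    exact hueq
  · refine ⟨e1, ‖v'‖⁻¹ • v', θ, he1, norm_smul_inv_norm hv0, ?_,
      Real.arccos_nonneg c, Real.arccos_le_pi c, rfl, ?_⟩
    · have h2 : ⟪e1, c • e1⟫ = c := by
        rw [real_inner_smul_right, real_inner_self_eq_norm_sq, he1]; ring
      have hov : ⟪e1, v'⟫ = (0:ℝ) := by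
        rw [hv'def, inner_sub_right, h2, ← hcdef]; ring
      rw [real_inner_smul_right, hov, mul_zero]
    · have hnv : ‖v'‖ = Real.sqrt (1 - c^2) := by
        rw [← hv'sq, Real.sqrt_sq (norm_nonneg v')]
      rw [hcos, hsin, ← hnv, smul_inv_smul₀ (norm_ne_zero_iff.mpr hv0), hv'def]
      abel


private lemma aux_radial {E : Type*} [NormedAddCommGroup E] [InnerProductSpace ℝ E]
    {e : E} (he : ‖e‖ = 1) {a b : ℝ} (h0 : 0 ≤ a) (hab : a ≤ b) :
    ‖a • e - b • e‖ = b - a ∧ ‖a • e + b • e‖ = a + b := by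
  rw [← sub_smul, ← add_smul, norm_smul, norm_smul, he, mul_one, mul_one,
    Real.norm_eq_abs, Real.norm_eq_abs, abs_of_nonpos (by linarith : a - b ≤ 0),
    abs_of_nonneg (by linarith : (0:ℝ) ≤ a + b)]
  exact ⟨by ring, rfl⟩

set_option maxHeartbeats 1000000 in
/-- Finite Chain Lemma: any two points of norm at least `2R` in `ℝⁿ` (`n ≥ 2`) can be
joined by a chain of at most `8` intermediate points of norm at least `2R`, with
consecutive gaps at most `‖x - y‖`, such that each ball with a consecutive pair as an
antipodal diameter pair avoids `B_R(0)`. -/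
theorem finite_chain_lemma (n : ℕ) (hn : 2 ≤ n) (R : ℝ) (hR : 0 < R)
    (x y : EuclideanSpace ℝ (Fin n)) (hx : 2 * R ≤ ‖x‖) (hy : 2 * R ≤ ‖y‖) :
    ∃ (m : ℕ) (w : ℕ → EuclideanSpace ℝ (Fin n)),
      1 ≤ m ∧ m ≤ 8 ∧
      w 0 = x ∧ w (m + 1) = y ∧
      (∀ i, 1 ≤ i → i ≤ m → 2 * R ≤ ‖w i‖) ∧
      (∀ i ≤ m, ‖w i - w (i + 1)‖ ≤ ‖x - y‖) ∧
      (∀ i ≤ m,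
        Metric.ball (((1 : ℝ) / 2) • (w i + w (i + 1))) (‖w i - w (i + 1)‖ / 2) ⊆
          (Metric.ball (0 : EuclideanSpace ℝ (Fin n)) R)ᶜ) := by
  have hxpos : (0:ℝ) < ‖x‖ := by linarith
  have hypos : (0:ℝ) < ‖y‖ := by linarith
  have hxn : x ≠ 0 := by intro h; rw [h, norm_zero] at hxpos; linarith
  have hyn : y ≠ 0 := by intro h; rw [h, norm_zero] at hypos; linarith
  obtain ⟨e1, e2, θ, he1, he2, h12, hθ0, hθπ, hxe, hye⟩ := aux_decomp hn x y hxn hyn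
  set L : ℝ := max ‖x‖ ‖y‖ with hLdef
  have hLx : ‖x‖ ≤ L := le_max_left _ _
  have hLy : ‖y‖ ≤ L := le_max_right _ _
  have hL2R : 2 * R ≤ L := le_trans hx hLx
  have hL0 : (0:ℝ) < L := by linarith
  -- the rotating chain on the sphere of radius L
  set q : ℕ → EuclideanSpace ℝ (Fin n) :=
    fun j => (L * Real.cos (j * (θ/4))) • e1 + (L * Real.sin (j * (θ/4))) • e2 with hq
  set d : EuclideanSpace ℝ (Fin n) := Real.cos θ • e1 + Real.sin θ • e2 with hd
  have hx4 : ‖x‖ • e1 = x := by rw [← hxe]; exact smul_inv_smul₀ (ne_of_gt hxpos) x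
  have hy4 : ‖y‖ • d = y := by rw [← hye]; exact smul_inv_smul₀ (ne_of_gt hypos) y
  have hq0 : q 0 = L • e1 := by simp [hq]
  have hc4 : ((4:ℕ):ℝ) * (θ/4) = θ := by push_cast; ring
  have hq4 : q 4 = L • d := by
    simp only [hq, hc4, hd]
    rw [smul_add, smul_smul, smul_smul]
  -- radial norms
  have hrx := aux_radial he1 (le_of_lt hxpos) hLx
  have hd1 : ‖d‖ = 1 := by
    have h2 := aux_norm_combo he1 he2 h12 (Real.cos θ) (Real.sin θ)
    have h3 : ‖d‖^2 = 1 := by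
      rw [hd, h2]; nlinarith [Real.sin_sq_add_cos_sq θ]
    have h4 : (‖d‖ - 1) * (‖d‖ + 1) = 0 := by linear_combination h3
    rcases mul_eq_zero.mp h4 with h5 | h5
    · linarith
    · linarith [norm_nonneg d]
  have hry := aux_radial hd1 (le_of_lt hypos) hLy
  -- gap bounds for the radial steps
  have hmax : (L - ‖x‖) + (L - ‖y‖) ≤ ‖x - y‖ := by
    have h2 := abs_norm_sub_norm_le x y
    rw [abs_le] at h2
    have h3 : L = ‖x‖ ∨ L = ‖y‖ := max_choice ‖x‖ ‖y‖
    rcases h3 with h | h <;> rw [h] <;> linarith [h2.1, h2.2]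
  -- cosine bounds for the quarter angle
  have hpi : (0:ℝ) < Real.pi := Real.pi_pos
  have hφ0 : (0:ℝ) ≤ θ/4 := by linarith
  have hφπ : θ/4 ≤ Real.pi/4 := by linarith
  have hccos : Real.sqrt 2 / 2 ≤ Real.cos (θ/4) := by
    have h1 : Real.cos (Real.pi/4) ≤ Real.cos (θ/4) :=
      Real.cos_le_cos_of_nonneg_of_le_pi hφ0 (by linarith) hφπ
    rwa [Real.cos_pi_div_four] at h1
  have hc1 : Real.cos (θ/4) ≤ 1 := Real.cos_le_one _
  -- squared norms of differences and sums of consecutive chain points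
  have hsub : ∀ j : ℕ, ‖q j - q (j+1)‖^2 = 2*L^2*(1 - Real.cos (θ/4)) := by
    intro j
    have harg : (j:ℝ)*(θ/4) - ((j+1:ℕ):ℝ)*(θ/4) = -(θ/4) := by push_cast; ring
    simp only [hq]
    rw [aux_combo_sub he1 he2 h12 L ((j:ℝ)*(θ/4)) (((j+1:ℕ):ℝ)*(θ/4)), harg, Real.cos_neg]
  have hsum : ∀ j : ℕ, ‖q j + q (j+1)‖^2 = 2*L^2*(1 + Real.cos (θ/4)) := by
    intro j
    have harg : (j:ℝ)*(θ/4) - ((j+1:ℕ):ℝ)*(θ/4) = -(θ/4) := by push_cast; ring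
    simp only [hq]
    rw [aux_combo_add he1 he2 h12 L ((j:ℝ)*(θ/4)) (((j+1:ℕ):ℝ)*(θ/4)), harg, Real.cos_neg]
  -- the total turning identity
  have hcosθ : Real.cos θ = 8*(Real.cos (θ/4))^4 - 8*(Real.cos (θ/4))^2 + 1 := by
    have h1 : Real.cos θ = Real.cos (2*(2*(θ/4))) := by congr 1; ring
    rw [h1, Real.cos_two_mul, Real.cos_two_mul]; ring
  have hU2 : ‖q 0 - q 4‖^2 = 2*L^2*(1 - Real.cos θ) := by
    have harg : ((0:ℕ):ℝ)*(θ/4) - ((4:ℕ):ℝ)*(θ/4) = -θ := by push_cast; ring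
    simp only [hq]
    rw [aux_combo_sub he1 he2 h12 L (((0:ℕ):ℝ)*(θ/4)) (((4:ℕ):ℝ)*(θ/4)), harg, Real.cos_neg]
  -- distances from the endpoints to the sphere chain endpoints
  have hq0x : ‖q 0 - x‖ = L - ‖x‖ := by
    rw [hq0]
    conv_lhs => rw [← hx4]
    rw [norm_sub_rev]; exact hrx.1
  have hyq4 : ‖y - q 4‖ = L - ‖y‖ := by
    rw [hq4]
    conv_lhs => rw [← hy4]
    exact hry.1
  have hU : ‖q 0 - q 4‖ ≤ 2*‖x - y‖ := by
    have h4 := dist_triangle4 (q 0) x y (q 4)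
    simp only [dist_eq_norm] at h4
    rw [hq0x] at h4
    rw [hyq4] at h4
    linarith [hmax]
  -- gap bound for sphere steps
  have hDgap : ∀ j : ℕ, ‖q j - q (j+1)‖ ≤ ‖x - y‖ := by
    intro j
    have h2D := aux_gap L (‖q j - q (j+1)‖) (‖q 0 - q 4‖) (Real.cos (θ/4)) hL0 hccos hc1
      (norm_nonneg _) (norm_nonneg _) (hsub j) (by rw [hU2, hcosθ])
    linarith
  -- ball bound for sphere steps
  have hDball : ∀ j : ℕ, ‖q j - q (j+1)‖ + 2*R ≤ ‖q j + q (j+1)‖ := by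
    intro j
    exact aux_step R L (‖q j - q (j+1)‖) (‖q j + q (j+1)‖) (Real.cos (θ/4)) hR hL2R hccos hc1
      (norm_nonneg _) (norm_nonneg _) (hsub j) (hsum j)
  -- norms of chain points
  have hqn : ∀ j : ℕ, 2*R ≤ ‖q j‖ := by
    intro j
    have h2 := aux_norm_combo he1 he2 h12 (L*Real.cos ((j:ℝ)*(θ/4))) (L*Real.sin ((j:ℝ)*(θ/4)))
    have h3 : ‖q j‖^2 = L^2 := by
      simp only [hq]; rw [h2]; nlinarith [Real.sin_sq_add_cos_sq ((j:ℝ)*(θ/4))]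
    have h4 : (2*R)^2 ≤ ‖q j‖^2 := by rw [h3]; nlinarith
    exact le_of_pow_le_pow_left₀ two_ne_zero (norm_nonneg _) h4
  -- radial pair facts
  have hgapA : ‖x - q 0‖ ≤ ‖x - y‖ := by
    rw [norm_sub_rev, hq0x]; linarith
  have hballA : ‖x - q 0‖ + 2*R ≤ ‖x + q 0‖ := by
    rw [norm_sub_rev, hq0x, hq0]
    conv_rhs => rw [← hx4]
    rw [hrx.2]; linarith
  have hgapF : ‖q 4 - y‖ ≤ ‖x - y‖ := by
    rw [norm_sub_rev, hyq4]; linarith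
  have hballF : ‖q 4 - y‖ + 2*R ≤ ‖q 4 + y‖ := by
    rw [norm_sub_rev, hyq4, hq4]
    conv_rhs => rw [← hy4]
    rw [add_comm (L • d) (‖y‖ • d), hry.2]; linarith
  -- assemble the chain
  refine ⟨5, fun i => match i with
      | 0 => x | 1 => q 0 | 2 => q 1 | 3 => q 2 | 4 => q 3 | 5 => q 4 | _ => y,
    by norm_num, by norm_num, rfl, rfl, ?_, ?_, ?_⟩
  · intro i hi1 hi5
    interval_cases i
    · exact hqn 0
    · exact hqn 1
    · exact hqn 2
    · exact hqn 3
    · exact hqn 4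
  · intro i hi
    interval_cases i
    · exact hgapA
    · exact hDgap 0
    · exact hDgap 1
    · exact hDgap 2
    · exact hDgap 3
    · exact hgapF
  · intro i hi
    interval_cases i
    · exact aux_ball_subset x (q 0) hballA
    · exact aux_ball_subset (q 0) (q 1) (hDball 0)
    · exact aux_ball_subset (q 1) (q 2) (hDball 1)
    · exact aux_ball_subset (q 2) (q 3) (hDball 2)
    · exact aux_ball_subset (q 3) (q 4) (hDball 3)
    · exact aux_ball_subset (q 4) y hballF
end

section
/- Let a ≥ 1 and let x, y ∈ ℝ² with ‖x‖ = ‖y‖ = 1 + a. If ‖y − x‖ > a, then there exist m ∈ {1, …, 7} and points z_1, …, z_m ∈ ℝ² such that ‖z_1‖ = ⋯ = ‖z_m‖ = 1 + a, ‖x − z_1‖ = ‖z_1 − z_2‖ = ⋯ = ‖z_{m−1} − z_m‖ = a, and ‖y − z_m‖ ≤ a. -/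
open Real

lemma chord_abs (t : ℝ) :
    ‖Complex.exp (t * Complex.I) - 1‖ = 2 * |Real.sin (t / 2)| := by
  have h1 : (Complex.exp (t * Complex.I) - 1).re = Real.cos t - 1 := by
    simp [Complex.exp_ofReal_mul_I_re]
  have h2 : (Complex.exp (t * Complex.I) - 1).im = Real.sin t := by
    simp [Complex.exp_ofReal_mul_I_im]
  rw [Complex.norm_def, Complex.normSq_apply, h1, h2]
  have hs : Real.sin t = 2 * Real.sin (t/2) * Real.cos (t/2) := by
    rw [← Real.sin_two_mul]; ring_nf
  have hc : Real.cos t = 1 - 2 * Real.sin (t/2) ^ 2 := by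
    have h := Real.cos_two_mul (t/2)
    have h2 : 2 * (t/2) = t := by ring
    rw [h2] at h
    nlinarith [Real.sin_sq_add_cos_sq (t/2)]
  have : (Real.cos t - 1) * (Real.cos t - 1) + Real.sin t * Real.sin t
      = (2 * |Real.sin (t/2)|) ^ 2 := by
    rw [hs, hc]
    nlinarith [Real.sin_sq_add_cos_sq (t/2), sq_abs (Real.sin (t/2))]
  rw [this, Real.sqrt_sq (by positivity)]

lemma exp_diff_abs (u v : ℝ) :
    ‖Complex.exp (u * Complex.I) - Complex.exp (v * Complex.I)‖
      = 2 * |Real.sin ((u - v) / 2)| := by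
  have h : Complex.exp (↑u * Complex.I) - Complex.exp (↑v * Complex.I)
      = Complex.exp (↑v * Complex.I) * (Complex.exp (↑(u - v) * Complex.I) - 1) := by
    rw [mul_sub, ← Complex.exp_add, mul_one]; push_cast; ring_nf
  rw [h, norm_mul, Complex.norm_exp_ofReal_mul_I, one_mul, chord_abs]

set_option maxHeartbeats 1000000 in
/-- Chain lemma on the circle of radius `1 + a` (`a ≥ 1`) in `ℝ²`: if `x, y` lie on this
circle with `‖y - x‖ > a`, there is a chain of at most `7` points on the circle starting
at distance `a` from `x`, with consecutive distances `a`, ending within distance `a`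
of `y`. -/
theorem circle_chain_lemma (a : ℝ) (ha : 1 ≤ a)
    (x y : EuclideanSpace ℝ (Fin 2))
    (hx : ‖x‖ = 1 + a) (hy : ‖y‖ = 1 + a) (hxy : a < ‖y - x‖) :
    ∃ (m : ℕ) (z : ℕ → EuclideanSpace ℝ (Fin 2)),
      1 ≤ m ∧ m ≤ 7 ∧
      (∀ i, 1 ≤ i → i ≤ m → ‖z i‖ = 1 + a) ∧
      ‖x - z 1‖ = a ∧
      (∀ i, 1 ≤ i → i < m → ‖z i - z (i + 1)‖ = a) ∧
      ‖y - z m‖ ≤ a := by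
  set R : ℝ := 1 + a with hR
  have hRpos : 0 < R := by rw [hR]; linarith
  obtain ⟨f⟩ : Nonempty (ℂ ≃ₗᵢ[ℝ] EuclideanSpace ℝ (Fin 2)) :=
    ⟨Complex.isometryOfOrthonormal (EuclideanSpace.basisFun (Fin 2) ℝ)⟩
  set X : ℂ := f.symm x with hXdef
  set Y : ℂ := f.symm y with hYdef
  have hfX : f X = x := f.apply_symm_apply x
  have hfY : f Y = y := f.apply_symm_apply y
  have hXn : ‖X‖ = R := by
    rw [hXdef, f.symm.norm_map, hx]
  have hYn : ‖Y‖ = R := by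
    rw [hYdef, f.symm.norm_map, hy]
  have hX0 : X ≠ 0 := by
    intro h; rw [h, norm_zero] at hXn; exact hRpos.ne' hXn.symm
  set φ : ℝ := (Y / X).arg with hφdef
  have hYX : Y = X * Complex.exp (φ * Complex.I) := by
    have h := Complex.norm_mul_exp_arg_mul_I (Y / X)
    have habs : ‖Y / X‖ = 1 := by
      rw [norm_div, hXn, hYn, div_self hRpos.ne']
    rw [habs, Complex.ofReal_one, one_mul] at h
    rw [← hφdef] at h
    rw [h, mul_div_cancel₀ _ hX0]
  have hφpi : |φ| ≤ π := Complex.abs_arg_le_pi _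
  clear_value X Y
  clear_value φ
  have hpi := Real.pi_pos
  -- step angle
  set θ : ℝ := 2 * Real.arcsin (a / (2 * R)) with hθdef
  have hapos : 0 < a := by linarith
  have hfrac1 : (1:ℝ)/4 ≤ a / (2 * R) := by
    rw [div_le_div_iff₀ (by norm_num) (by positivity), hR]; linarith
  have hfrac2 : a / (2 * R) < 1/2 := by
    rw [div_lt_div_iff₀ (by positivity) (by norm_num), hR]; linarith
  have hfracmem : a / (2 * R) ∈ Set.Icc (-1:ℝ) 1 := by
    constructor <;> nlinarith
  have hθhalf : θ / 2 = Real.arcsin (a / (2 * R)) := by rw [hθdef]; ring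
  have hsinθ : Real.sin (θ / 2) = a / (2 * R) := by
    rw [hθhalf, Real.sin_arcsin hfracmem.1 hfracmem.2]
  have hθhalf_nonneg : 0 ≤ θ / 2 := by
    rw [hθhalf]; exact Real.arcsin_nonneg.2 (by positivity)
  have hθhalf_lt : θ / 2 < π / 6 := by
    rw [hθhalf]
    rw [Real.arcsin_lt_iff_lt_sin hfracmem (by constructor <;> linarith)]
    rw [Real.sin_pi_div_six]; exact hfrac2
  have hθhalf_gt : π / 14 < θ / 2 := by
    rw [hθhalf]
    rw [Real.lt_arcsin_iff_sin_lt (by constructor <;> linarith) hfracmem]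
    have h2 : Real.sin (π/14) ≤ π/14 := Real.sin_le (by positivity)
    have h3 : π < 3.15 := by linarith [Real.pi_lt_d2]
    linarith
  have hθpos : 0 < θ := by linarith
  have hθltpi : θ < π / 3 := by linarith
  have ha_eq : a = 2 * R * Real.sin (θ/2) := by
    rw [hsinθ]; field_simp
  clear_value θ
  -- distance helper
  have hdist : ∀ u v : ℝ,
      ‖f (X * Complex.exp (u * Complex.I)) - f (X * Complex.exp (v * Complex.I))‖
        = 2 * R * |Real.sin ((u - v) / 2)| := by
    intro u v
    rw [← f.map_sub, f.norm_map, ← mul_sub, norm_mul, hXn,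
      exp_diff_abs]
    ring
  -- angular distance ψ
  set ψ : ℝ := |φ| with hψdef
  have hψpi : ψ ≤ π := hφpi
  have hψnonneg : 0 ≤ ψ := abs_nonneg _
  -- ‖y - x‖ in terms of ψ
  have h0x : f (X * Complex.exp ((0:ℝ) * Complex.I)) = x := by
    norm_num [hfX]
  have hφy : f (X * Complex.exp ((φ:ℝ) * Complex.I)) = y := by rw [← hYX, hfY]
  have hsinψ_abs : |Real.sin (φ/2)| = Real.sin (ψ/2) := by
    rcases le_or_gt 0 φ with h | h
    · have hφle : φ ≤ π := by rw [← abs_of_nonneg h]; exact hφpi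
      rw [hψdef, abs_of_nonneg h,
        abs_of_nonneg (Real.sin_nonneg_of_nonneg_of_le_pi (by linarith) (by linarith))]
    · rw [hψdef, abs_of_neg h, show φ/2 = -(-φ/2) by ring, Real.sin_neg, abs_neg,
        abs_of_nonneg (Real.sin_nonneg_of_nonneg_of_le_pi (by linarith)
          (by rw [hψdef, abs_of_neg h] at hψpi; linarith)), neg_div]
  have hyx : ‖y - x‖ = 2 * R * Real.sin (ψ/2) := by
    rw [← h0x, ← hφy, hdist, sub_zero, hsinψ_abs]
  -- θ < ψ
  have hsinlt : Real.sin (θ/2) < Real.sin (ψ/2) := by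
    rw [hyx] at hxy; rw [ha_eq] at hxy; nlinarith
  have hθψ : θ < ψ := by
    by_contra h
    push_neg at h
    have := Real.strictMonoOn_sin.monotoneOn
      (Set.mem_Icc.2 ⟨by linarith, by linarith⟩)
      (Set.mem_Icc.2 ⟨by linarith, by linarith⟩) (by linarith : ψ/2 ≤ θ/2)
    linarith
  -- number of steps
  set m : ℕ := ⌈ψ / θ⌉₊ with hmdef
  have hm_le : (ψ / θ : ℝ) ≤ m := Nat.le_ceil _
  have hm_lt : (m : ℝ) < ψ / θ + 1 := Nat.ceil_lt_add_one (div_nonneg hψnonneg hθpos.le)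
  have hm1 : 1 ≤ m := Nat.one_le_ceil_iff.2 (div_pos (hθpos.trans hθψ) hθpos)
  have hm7 : m ≤ 7 := by
    apply Nat.ceil_le.2
    rw [div_le_iff₀ hθpos]
    push_cast
    nlinarith
  clear_value m
  have hmθ : ψ ≤ m * θ := by
    rw [div_le_iff₀ hθpos] at hm_le; linarith
  have hmθ' : (m : ℝ) * θ < ψ + θ := by
    have : (m : ℝ) * θ < (ψ/θ + 1) * θ := by
      exact mul_lt_mul_of_pos_right hm_lt hθpos
    rw [add_mul, div_mul_cancel₀ _ hθpos.ne', one_mul] at this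
    exact this
  -- direction sign
  set s : ℝ := if 0 ≤ φ then 1 else -1 with hsdef
  have hsφ : s * ψ = φ := by
    rw [hsdef, hψdef]
    rcases le_or_gt 0 φ with h | h
    · rw [if_pos h, abs_of_nonneg h, one_mul]
    · rw [if_neg (not_le.2 h), abs_of_neg h]; ring
  have habs_s : ∀ c : ℝ, |Real.sin (s * c)| = |Real.sin c| := by
    intro c
    rw [hsdef]
    rcases le_or_gt 0 φ with h | h
    · rw [if_pos h, one_mul]
    · rw [if_neg (not_le.2 h)]
      rw [show (-1 : ℝ) * c = -c by ring, Real.sin_neg, abs_neg]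
  clear_value s
  -- the chain
  refine ⟨m, fun i => f (X * Complex.exp ((s * i * θ : ℝ) * Complex.I)), hm1, hm7,
    ?_, ?_, ?_, ?_⟩
  · intro i _ _
    rw [f.norm_map, norm_mul, hXn, Complex.norm_exp_ofReal_mul_I,
      mul_one]
  · rw [← h0x, hdist]
    have he : ((0 : ℝ) - s * (1:ℕ) * θ) / 2 = s * (-(θ/2)) := by push_cast; ring
    rw [he, habs_s, Real.sin_neg, abs_neg,
      abs_of_nonneg (Real.sin_nonneg_of_nonneg_of_le_pi (by linarith) (by linarith)),
      ← ha_eq]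
  · intro i _ _
    rw [hdist]
    have he : (s * (i:ℕ) * θ - s * ((i+1 : ℕ):ℝ) * θ) / 2 = s * (-(θ/2)) := by
      push_cast; ring
    rw [he, habs_s, Real.sin_neg, abs_neg,
      abs_of_nonneg (Real.sin_nonneg_of_nonneg_of_le_pi (by linarith) (by linarith)),
      ← ha_eq]
  · rw [← hφy, hdist]
    have he : (φ - s * (m:ℕ) * θ) / 2 = s * ((ψ - m * θ)/2) := by
      rw [← hsφ]; ring
    rw [he, habs_s]
    have h1 : |Real.sin ((ψ - m*θ)/2)| = Real.sin ((m*θ - ψ)/2) := by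
      rw [show (ψ - m*θ)/2 = -((m*θ - ψ)/2) by ring, Real.sin_neg, abs_neg,
        abs_of_nonneg (Real.sin_nonneg_of_nonneg_of_le_pi (by linarith) (by linarith))]
    rw [h1]
    have h2 : Real.sin ((m*θ - ψ)/2) ≤ Real.sin (θ/2) := by
      apply Real.strictMonoOn_sin.monotoneOn
        (Set.mem_Icc.2 ⟨by linarith, by linarith⟩)
        (Set.mem_Icc.2 ⟨by linarith, by linarith⟩) (by linarith)
    rw [ha_eq]
    nlinarith
end

section
/- Let s ≥ t > 0 and let x, y ∈ ℝ² with ‖x‖ = ‖y‖ = t + s. If ‖y − x‖ > s, then there exist m ∈ {1, …, 7} and points z_1, …, z_m ∈ ℝ² such that ‖z_1‖ = ⋯ = ‖z_m‖ = t + s, ‖x − z_1‖ = ‖z_1 − z_2‖ = ⋯ = ‖z_{m−1} − z_m‖ = s, and ‖y − z_m‖ ≤ s. -/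
open Complex Real

lemma norm_cexp_mul_I_sub_one (w : ℝ) :
    ‖Complex.exp (w * Complex.I) - 1‖ = 2 * |Real.sin (w / 2)| := by
  have e1 : (w : ℂ) * I = ((w/2 : ℝ) : ℂ) * I + ((w/2 : ℝ) : ℂ) * I := by push_cast; ring
  have h : Complex.exp ((w : ℂ) * Complex.I) - 1
      = Complex.exp (((w/2 : ℝ) : ℂ) * Complex.I) * (2 * Complex.I * Complex.sin ((w/2 : ℝ) : ℂ)) := by
    rw [e1, Complex.exp_add, Complex.sin]
    have hI := Complex.I_sq
    set A := Complex.exp (((w/2 : ℝ) : ℂ) * I) with hA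
    set B := Complex.exp (-(((w/2 : ℝ)) : ℂ) * I) with hB
    have e3 : B * A = 1 := by
      rw [hA, hB, ← Complex.exp_add,
        show (-(((w/2:ℝ)):ℂ) * I + ((w/2:ℝ):ℂ) * I) = 0 by ring, Complex.exp_zero]
    linear_combination (-(A*(B-A))) * hI + e3
  rw [h, norm_mul, Complex.norm_exp_ofReal_mul_I, one_mul, norm_mul, norm_mul,
    ← Complex.ofReal_sin, Complex.norm_real, Real.norm_eq_abs, Complex.norm_I]
  norm_num

lemma chord (x : ℂ) (u v : ℝ) :
    ‖x * Complex.exp (u * Complex.I) - x * Complex.exp (v * Complex.I)‖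
      = ‖x‖ * (2 * |Real.sin ((u - v) / 2)|) := by
  have e : ((v : ℂ)) * I + (((u - v : ℝ)) : ℂ) * I = (u : ℂ) * I := by push_cast; ring
  have h : x * Complex.exp ((u:ℂ) * I) - x * Complex.exp ((v:ℂ) * I)
      = (x * Complex.exp ((v:ℂ) * I)) * (Complex.exp ((((u - v : ℝ)) : ℂ) * I) - 1) := by
    rw [mul_sub, mul_one, mul_assoc, ← Complex.exp_add, e]
  rw [h, norm_mul, norm_mul, Complex.norm_exp_ofReal_mul_I, mul_one, norm_cexp_mul_I_sub_one]

set_option maxHeartbeats 2000000 in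
theorem circle_chain_complex (s t : ℝ) (hts : t ≤ s) (ht : 0 < t)
    (x y : ℂ) (hx : ‖x‖ = t + s) (hy : ‖y‖ = t + s) (hxy : s < ‖y - x‖) :
    ∃ (m : ℕ) (z : ℕ → ℂ),
      1 ≤ m ∧ m ≤ 7 ∧
      (∀ i, 1 ≤ i → i ≤ m → ‖z i‖ = t + s) ∧
      ‖x - z 1‖ = s ∧
      (∀ i, 1 ≤ i → i < m → ‖z i - z (i + 1)‖ = s) ∧
      ‖y - z m‖ ≤ s := by
  have hs : 0 < s := lt_of_lt_of_le ht hts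
  have hR : 0 < t + s := by linarith
  set q : ℝ := s / (2 * (t + s)) with hq
  have hq0 : 0 < q := by positivity
  have hq1 : q ≤ 1/2 := by rw [hq, div_le_iff₀ (by linarith)]; linarith
  have hq4 : 1/4 ≤ q := by rw [hq, le_div_iff₀ (by linarith)]; linarith
  set θh : ℝ := Real.arcsin q with hθh
  have hsinθh : Real.sin θh = q := Real.sin_arcsin (by linarith) (by linarith)
  have hθh0 : 0 < θh := Real.arcsin_pos.mpr hq0
  have hθh2 : θh ≤ π / 2 := Real.arcsin_le_pi_div_two q
  have hsθ : 2 * (t + s) * Real.sin θh = s := by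
    rw [hsinθh, hq]; field_simp
  have hπ14 : π / 14 < θh := by
    have h1 : Real.sin (π/14) ≤ π/14 := Real.sin_le (by positivity)
    have h2 : π/14 < 1/4 := by nlinarith [Real.pi_lt_d2]
    have h3 : Real.sin (π/14) < Real.sin θh := by rw [hsinθh]; linarith
    by_contra hc
    push_neg at hc
    have := Real.strictMonoOn_sin.monotoneOn
      (Set.mem_Icc.mpr ⟨by linarith, hθh2⟩)
      (Set.mem_Icc.mpr ⟨by nlinarith [Real.pi_pos], by nlinarith [Real.pi_pos]⟩) hc
    linarith
  have hx0 : x ≠ 0 := by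
    intro h; rw [h, norm_zero] at hx; linarith
  set δ : ℝ := Complex.arg (y / x) with hδ
  have hyx : y = x * Complex.exp ((δ : ℂ) * I) := by
    have habs : ‖y / x‖ = 1 := by
      rw [norm_div, hx, hy, div_self hR.ne']
    have h2 := Complex.norm_mul_exp_arg_mul_I (y / x)
    rw [habs] at h2
    simp only [Complex.ofReal_one, one_mul] at h2
    rw [← hδ] at h2
    field_simp at h2
    rw [← h2, mul_comm]
  set α : ℝ := |δ| with hα
  have hαπ : α ≤ π := Complex.abs_arg_le_pi _
  have hα0 : 0 ≤ α := abs_nonneg δ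
  -- chords
  have hsinδ : |Real.sin (δ / 2)| = Real.sin (α / 2) := by
    have h1 : |Real.sin (δ/2)| = |Real.sin (α/2)| := by
      rcases abs_cases δ with ⟨h, _⟩ | ⟨h, _⟩
      · rw [hα, h]
      · rw [hα, h, show -δ/2 = -(δ/2) by ring, Real.sin_neg, abs_neg]
    rw [h1, _root_.abs_of_nonneg (Real.sin_nonneg_of_nonneg_of_le_pi (by linarith) (by linarith))]
  have hchordxy : ‖y - x‖ = (t + s) * (2 * Real.sin (α / 2)) := by
    have hxe : x = x * Complex.exp (((0:ℝ):ℂ) * I) := by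
      norm_num [Complex.exp_zero]
    calc ‖y - x‖ = ‖x * Complex.exp ((δ:ℝ) * I) - x * Complex.exp (((0:ℝ)) * I)‖ := by
          rw [← hyx, ← hxe]
      _ = ‖x‖ * (2 * |Real.sin ((δ - 0)/2)|) := chord x δ 0
      _ = (t + s) * (2 * Real.sin (α / 2)) := by rw [hx, sub_zero, hsinδ]
  -- α > 2 θh
  have hα2θ : 2 * θh < α := by
    have h1 : Real.sin θh < Real.sin (α / 2) := by nlinarith [hchordxy, hxy, hsθ]
    by_contra hc
    push_neg at hc
    have := Real.strictMonoOn_sin.monotoneOn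
      (Set.mem_Icc.mpr ⟨by linarith, by linarith⟩)
      (Set.mem_Icc.mpr ⟨by linarith, hθh2⟩) (by linarith : α / 2 ≤ θh)
    linarith
  set θ : ℝ := 2 * θh with hθdef
  have hθ0 : 0 < θ := by positivity
  set m : ℕ := ⌊α / θ⌋₊ with hm
  have hm1 : 1 ≤ m := Nat.le_floor (by
    rw [Nat.cast_one, le_div_iff₀ hθ0]; linarith)
  have hdiv0 : 0 ≤ α / θ := div_nonneg hα0 hθ0.le
  have hmle : (m : ℝ) * θ ≤ α := by
    have h1 := Nat.floor_le hdiv0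
    have h2 := mul_le_mul_of_nonneg_right h1 hθ0.le
    rwa [div_mul_cancel₀ _ hθ0.ne'] at h2
  have hmgt : α - (m:ℝ) * θ < θ := by
    have h1 := Nat.lt_floor_add_one (α / θ)
    have h2 := mul_lt_mul_of_pos_right h1 hθ0
    rw [div_mul_cancel₀ _ hθ0.ne'] at h2
    nlinarith
  have hm7 : m ≤ 7 := by
    have h1 : α / θ < 7 := by
      rw [div_lt_iff₀ hθ0, hθdef]
      linarith [hπ14, hαπ]
    have : (m : ℝ) < 7 := lt_of_le_of_lt (Nat.floor_le hdiv0) h1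
    have : (m:ℝ) ≤ 7 := this.le
    exact_mod_cast this
  set σ : ℝ := if 0 ≤ δ then 1 else -1 with hσ
  have hσcase : σ = 1 ∧ δ = α ∨ σ = -1 ∧ δ = -α := by
    rcases le_or_gt 0 δ with h | h
    · left; constructor
      · rw [hσ, if_pos h]
      · rw [hα, _root_.abs_of_nonneg h]
    · right; constructor
      · rw [hσ, if_neg (not_le.mpr h)]
      · rw [hα, _root_.abs_of_neg h]; ring
  have hσabs : ∀ v : ℝ, |Real.sin (σ * v)| = |Real.sin v| := by
    intro v
    rcases hσcase with ⟨h, _⟩ | ⟨h, _⟩ <;> rw [h]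
    · rw [one_mul]
    · rw [show (-1 : ℝ) * v = -v by ring, Real.sin_neg, abs_neg]
  have hzz : ∀ u v : ℝ, ‖x * Complex.exp ((u:ℂ) * I) - x * Complex.exp ((v:ℂ) * I)‖
      = (t + s) * (2 * |Real.sin ((u - v) / 2)|) := by
    intro u v; rw [chord, hx]
  have hsθh : Real.sin θh = s / (2 * (t + s)) := hsinθh
  have hθhπ2 : θh ≤ π / 2 := hθh2
  clear_value q θh δ α θ m σ
  have hsin_eq : ∀ v : ℝ, 0 ≤ v → v ≤ π → |Real.sin (σ * v)| = Real.sin v := by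
    intro v h0 hπ
    rw [hσabs, _root_.abs_of_nonneg (Real.sin_nonneg_of_nonneg_of_le_pi h0 hπ)]
  have hθhπ : θh ≤ π := by linarith [Real.pi_pos]
  refine ⟨m, fun i => x * Complex.exp (((σ * (i * θ) : ℝ) : ℂ) * I), hm1, hm7, ?_, ?_, ?_, ?_⟩
  · intro i _ _
    show ‖x * Complex.exp (((σ * (i * θ) : ℝ) : ℂ) * I)‖ = t + s
    rw [norm_mul, Complex.norm_exp_ofReal_mul_I, mul_one, hx]
  · show ‖x - x * Complex.exp (((σ * ((1:ℕ) * θ) : ℝ) : ℂ) * I)‖ = s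
    have hxe : x = x * Complex.exp (((0:ℝ):ℂ) * I) := by norm_num [Complex.exp_zero]
    nth_rewrite 1 [hxe]
    rw [hzz]
    rw [show ((0:ℝ) - σ * ((1:ℕ) * θ))/2 = σ * (-θh) by push_cast; rw [hθdef]; ring]
    rw [show Real.sin (σ * -θh) = - Real.sin (σ * θh) by
      rw [show σ * -θh = -(σ * θh) by ring, Real.sin_neg]]
    rw [abs_neg, hsin_eq θh hθh0.le hθhπ]
    linarith [hsθ]
  · intro i _ _
    show ‖x * Complex.exp (((σ * (i * θ) : ℝ) : ℂ) * I)
        - x * Complex.exp (((σ * ((((i+1:ℕ)):ℝ) * θ) : ℝ) : ℂ) * I)‖ = s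
    rw [hzz]
    rw [show (σ * ((i:ℝ) * θ) - σ * ((((i+1:ℕ)):ℝ) * θ))/2 = σ * (-θh) by
      push_cast; rw [hθdef]; ring]
    rw [show Real.sin (σ * -θh) = - Real.sin (σ * θh) by
      rw [show σ * -θh = -(σ * θh) by ring, Real.sin_neg]]
    rw [abs_neg, hsin_eq θh hθh0.le hθhπ]
    linarith [hsθ]
  · show ‖y - x * Complex.exp (((σ * (m * θ) : ℝ) : ℂ) * I)‖ ≤ s
    rw [hyx, hzz]
    have hδσ : δ = σ * α := by
      rcases hσcase with ⟨h1, h2⟩ | ⟨h1, h2⟩ <;> rw [h1, h2] <;> ring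
    rw [show (δ - σ * ((m:ℝ) * θ))/2 = σ * ((α - m * θ)/2) by rw [hδσ]; ring]
    have hnn : 0 ≤ (α - (m:ℝ) * θ)/2 := by linarith
    have hlt : (α - (m:ℝ) * θ)/2 ≤ θh := by linarith [hθdef, hmgt]
    rw [hsin_eq _ hnn (by linarith)]
    have hmono : Real.sin ((α - (m:ℝ) * θ)/2) ≤ Real.sin θh :=
      Real.strictMonoOn_sin.monotoneOn
        (Set.mem_Icc.mpr ⟨by linarith, by linarith⟩)
        (Set.mem_Icc.mpr ⟨by linarith, hθhπ2⟩) hlt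
    nlinarith [hsθ]

/-- Chain lemma on the circle of radius `t + s` (`s ≥ t > 0`) in `ℝ²`: if `x, y` lie on
this circle with `‖y - x‖ > s`, there is a chain of at most `7` points on the circle
starting at distance `s` from `x`, with consecutive distances `s`, ending within
distance `s` of `y`. -/
theorem circle_chain_lemma_scaled (s t : ℝ) (hts : t ≤ s) (ht : 0 < t)
    (x y : EuclideanSpace ℝ (Fin 2))
    (hx : ‖x‖ = t + s) (hy : ‖y‖ = t + s) (hxy : s < ‖y - x‖) :
    ∃ (m : ℕ) (z : ℕ → EuclideanSpace ℝ (Fin 2)),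
      1 ≤ m ∧ m ≤ 7 ∧
      (∀ i, 1 ≤ i → i ≤ m → ‖z i‖ = t + s) ∧
      ‖x - z 1‖ = s ∧
      (∀ i, 1 ≤ i → i < m → ‖z i - z (i + 1)‖ = s) ∧
      ‖y - z m‖ ≤ s := by
  set f : ℂ ≃ₗᵢ[ℝ] EuclideanSpace ℝ (Fin 2) :=
    Complex.isometryOfOrthonormal (EuclideanSpace.basisFun (Fin 2) ℝ) with hf
  have hfx : ‖f.symm x‖ = t + s := by rw [f.symm.norm_map, hx]
  have hfy : ‖f.symm y‖ = t + s := by rw [f.symm.norm_map, hy]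
  have hfxy : s < ‖f.symm y - f.symm x‖ := by
    rw [← f.symm.map_sub, f.symm.norm_map]; exact hxy
  obtain ⟨m, z, hm1, hm7, hnorm, hfirst, hmid, hlast⟩ :=
    circle_chain_complex s t hts ht (f.symm x) (f.symm y) hfx hfy hfxy
  refine ⟨m, fun i => f (z i), hm1, hm7, ?_, ?_, ?_, ?_⟩
  · intro i h1 h2; rw [f.norm_map]; exact hnorm i h1 h2
  · have : x - f (z 1) = f (f.symm x - z 1) := by
      rw [f.map_sub, f.apply_symm_apply]
    rw [this, f.norm_map]; exact hfirst
  · intro i h1 h2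
    rw [← f.map_sub, f.norm_map]; exact hmid i h1 h2
  · have : y - f (z m) = f (f.symm y - z m) := by
      rw [f.map_sub, f.apply_symm_apply]
    rw [this, f.norm_map]; exact hlast
end

section
/- Let s ≥ t > 0 and let x, y ∈ ℝ² with ‖y‖ ≥ ‖x‖ = t + s, and suppose ‖(‖x‖/‖y‖)·y − x‖ > s. Then there exist m ∈ {1, …, 8} and points z_1, …, z_m ∈ ℝ² such that: (i) ‖z_1‖ = ⋯ = ‖z_m‖ = t + s and, writing w_0 = x, w_i = z_i for 1 ≤ i ≤ m, w_{m+1} = y, one has ‖w_i − w_{i+1}‖ ≤ ‖y − x‖ for every 0 ≤ i ≤ m; and (ii) for every 0 ≤ i ≤ m, the open ball of radius ‖w_i − w_{i+1}‖/2 centered at (w_i + w_{i+1})/2 is contained in ℝ² \ B_t(0), where B_t(0) is the open ball of radius t centered at the origin. -/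
open Complex Metric Real

lemma exp_I_sub_one_norm (φ : ℝ) : ‖Complex.exp (φ * Complex.I) - 1‖ ≤ |φ| := by
  have h1 : ‖Complex.exp (φ * Complex.I) - 1‖^2 = 2 - 2 * Real.cos φ := by
    rw [Complex.sq_norm, Complex.normSq_apply]
    simp [Complex.sub_re, Complex.sub_im, Complex.exp_ofReal_mul_I_re,
      Complex.exp_ofReal_mul_I_im]
    nlinarith [Real.sin_sq_add_cos_sq φ]
  have h2 : 1 - φ^2/2 ≤ Real.cos φ := Real.one_sub_sq_div_two_le_cos
  have h3 : ‖Complex.exp (φ * Complex.I) - 1‖^2 ≤ |φ|^2 := by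
    rw [h1, _root_.sq_abs]; nlinarith
  nlinarith [norm_nonneg (Complex.exp (φ * Complex.I) - 1), abs_nonneg φ]

lemma ball_avoid {E : Type*} [NormedAddCommGroup E] [NormedSpace ℝ E] (t : ℝ)
    (u v : E) (h : 2 * t + ‖u - v‖ ≤ ‖u + v‖) :
    Metric.ball (((1:ℝ)/2) • (u + v)) (‖u - v‖ / 2) ⊆ (Metric.ball (0:E) t)ᶜ := by
  intro z hz
  rw [Metric.mem_ball, dist_eq_norm] at hz
  rw [Set.mem_compl_iff, Metric.mem_ball, dist_zero_right, not_lt]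
  have h1 : ‖((1:ℝ)/2) • (u + v)‖ = ‖u + v‖ / 2 := by
    rw [norm_smul]; simp; ring
  have h2 := norm_sub_norm_le (((1:ℝ)/2) • (u + v)) z
  rw [norm_sub_rev, h1] at h2
  linarith

lemma pair_bound (s t : ℝ) (hts : t ≤ s) (ht : 0 < t) (u v : ℂ)
    (hu : ‖u‖ = t + s) (hv : ‖v‖ = t + s) (hd : ‖u - v‖ ≤ s) :
    2 * t + ‖u - v‖ ≤ ‖u + v‖ := by
  have hpar := parallelogram_law_with_norm ℝ u v
  have h1 : (2*t + ‖u - v‖)^2 ≤ ‖u + v‖^2 := by nlinarith [norm_nonneg (u - v)]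
  have h2 : 0 < 2*t + ‖u - v‖ + ‖u + v‖ := by
    have := norm_nonneg (u - v); have := norm_nonneg (u + v); linarith
  nlinarith [h1, h2]

set_option maxHeartbeats 2000000 in
lemma chain_corollary_complex (s t : ℝ) (hts : t ≤ s) (ht : 0 < t)
    (x y : ℂ)
    (hx : ‖x‖ = t + s) (hxy : ‖x‖ ≤ ‖y‖)
    (hproj : s < ‖(‖x‖ / ‖y‖) • y - x‖) :
    ∃ (m : ℕ) (w : ℕ → ℂ),
      1 ≤ m ∧ m ≤ 8 ∧
      w 0 = x ∧ w (m + 1) = y ∧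
      (∀ i, 1 ≤ i → i ≤ m → ‖w i‖ = t + s) ∧
      (∀ i ≤ m, ‖w i - w (i + 1)‖ ≤ ‖y - x‖) ∧
      (∀ i ≤ m,
        Metric.ball (((1 : ℝ) / 2) • (w i + w (i + 1))) (‖w i - w (i + 1)‖ / 2) ⊆
          (Metric.ball (0 : ℂ) t)ᶜ) := by
  have hR0 : 0 < t + s := by linarith
  have hy0 : 0 < ‖y‖ := lt_of_lt_of_le (by rw [hx] at *; exact hR0) hxy
  have hx0 : x ≠ 0 := by
    intro h; rw [h, norm_zero] at hx; linarith
  rw [hx] at hproj hxy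
  set n : ℝ := ‖y‖ with hn
  set p : ℂ := ((t + s) / n : ℝ) • y with hpdef
  clear_value n p
  have hp : ‖p‖ = t + s := by
    rw [hpdef, norm_smul, Real.norm_eq_abs, _root_.abs_of_nonneg (by positivity), ← hn,
      div_mul_cancel₀ _ (ne_of_gt hy0)]
  have hpx : s < ‖p - x‖ := hproj
  set θ := (p / x).arg with hθdef
  clear_value θ
  have hθpi : |θ| ≤ π := by rw [hθdef]; exact Complex.abs_arg_le_pi _
  have hexpθ : Complex.exp ((θ : ℂ) * Complex.I) = p / x := by
    have h := Complex.norm_mul_exp_arg_mul_I (p / x)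
    have habs : ‖p / x‖ = 1 := by
      rw [norm_div, hp, hx]
      field_simp
    rw [← hθdef, habs] at h
    simpa using h
  set w : ℕ → ℂ := fun i => if i = 8 then y else x * Complex.exp ((θ * i / 7 : ℝ) * Complex.I)
    with hw
  clear_value w
  have hw0 : w 0 = x := by simp [hw]
  have hw8 : w 8 = y := by simp [hw]
  have hw7 : w 7 = p := by
    have h7 : ((θ * (7:ℕ) / 7 : ℝ) : ℂ) = (θ : ℂ) := by push_cast; ring
    simp only [hw, if_neg (by norm_num : ¬ (7:ℕ) = 8), h7, hexpθ]
    field_simp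
  have hnorm : ∀ i : ℕ, 1 ≤ i → i ≤ 7 → ‖w i‖ = t + s := by
    intro i h1 h2
    simp only [hw, if_neg (by omega : ¬ i = 8)]
    rw [norm_mul, Complex.norm_exp_ofReal_mul_I, hx, mul_one]
  have hnorm' : ∀ i : ℕ, i ≤ 7 → ‖w i‖ = t + s := by
    intro i hi
    rcases Nat.eq_zero_or_pos i with h | h
    · rw [h, hw0, hx]
    · exact hnorm i h hi
  -- chord bound
  have hstep : ∀ i : ℕ, i ≤ 6 → ‖w i - w (i+1)‖ ≤ (t + s) * (|θ| / 7) := by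
    intro i hi
    simp only [hw, if_neg (by omega : ¬ i = 8), if_neg (by omega : ¬ i + 1 = 8)]
    have hsplit : ((θ * (↑(i+1) : ℝ) / 7 : ℝ) : ℂ) = ((θ * i / 7 : ℝ) : ℂ) + ((θ/7 : ℝ) : ℂ) := by
      push_cast; ring
    rw [show ((θ * (↑(i+1) : ℝ) / 7 : ℝ) : ℂ) * Complex.I
        = ((θ * i / 7 : ℝ) : ℂ) * Complex.I + ((θ/7 : ℝ) : ℂ) * Complex.I by
      rw [hsplit]; ring]
    rw [Complex.exp_add]
    have heq : x * Complex.exp (((θ * i / 7 : ℝ) : ℂ) * Complex.I)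
        - x * (Complex.exp (((θ * i / 7 : ℝ) : ℂ) * Complex.I)
            * Complex.exp (((θ/7 : ℝ) : ℂ) * Complex.I))
        = -((x * Complex.exp (((θ * i / 7 : ℝ) : ℂ) * Complex.I))
            * (Complex.exp (((θ/7 : ℝ) : ℂ) * Complex.I) - 1)) := by ring
    rw [heq, norm_neg, norm_mul, norm_mul, Complex.norm_exp_ofReal_mul_I, hx, mul_one]
    have hb := exp_I_sub_one_norm (θ/7)
    have hb2 : |θ/7| = |θ| / 7 := by rw [abs_div]; norm_num
    rw [hb2] at hb
    exact mul_le_mul_of_nonneg_left hb (le_of_lt hR0)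
  have hstep' : ∀ i : ℕ, i ≤ 6 → ‖w i - w (i+1)‖ ≤ s := by
    intro i hi
    have h1 := hstep i hi
    have h2 : (t + s) * (|θ| / 7) ≤ s := by
      nlinarith [Real.pi_lt_d2, abs_nonneg θ]
    linarith
  -- s ≤ ‖y - x‖
  have hx2 : x.re * x.re + x.im * x.im = (t+s) * (t+s) := by
    rw [← Complex.normSq_apply, ← Complex.sq_norm, hx]; ring
  have hy2 : y.re * y.re + y.im * y.im = n * n := by
    rw [← Complex.normSq_apply, ← Complex.sq_norm, ← hn]; ring
  have hcs : (x.re * y.re + x.im * y.im)^2 ≤ ((t+s) * n)^2 := by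
    nlinarith [sq_nonneg (x.re * y.im - x.im * y.re)]
  have hc : x.re * y.re + x.im * y.im ≤ (t+s) * n := by
    nlinarith [mul_pos hR0 hy0]
  have h1 : ‖y - x‖^2 = (y.re - x.re)^2 + (y.im - x.im)^2 := by
    rw [Complex.sq_norm, Complex.normSq_apply]
    simp [Complex.sub_re, Complex.sub_im]; ring
  have h2 : ‖p - x‖^2 = ((t+s)/n * y.re - x.re)^2 + ((t+s)/n * y.im - x.im)^2 := by
    rw [Complex.sq_norm, Complex.normSq_apply]
    simp [hpdef, Complex.real_smul, Complex.sub_re, Complex.sub_im, Complex.mul_re,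
      Complex.mul_im, Complex.ofReal_re, Complex.ofReal_im]
    try ring
  have h3 : n^2 * ‖p - x‖^2 = ((t+s) * y.re - n * x.re)^2 + ((t+s) * y.im - n * x.im)^2 := by
    rw [h2]; field_simp; try ring
  have key0 : 0 ≤ n * (n - (t+s)) * (n * (n + (t+s)) - 2 * (x.re * y.re + x.im * y.im)) := by
    apply mul_nonneg (mul_nonneg hy0.le (by linarith))
    nlinarith [hc, hxy, hy0]
  have hsq : ‖p - x‖^2 ≤ ‖y - x‖^2 := by
    have hnn : (0:ℝ) < n^2 := by positivity
    have e1 : n^2*((y.re - x.re)^2 + (y.im - x.im)^2)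
        - (((t+s)*y.re - n*x.re)^2 + ((t+s)*y.im - n*x.im)^2)
        = n*(n-(t+s))*(n*(n+(t+s)) - 2*(x.re*y.re + x.im*y.im)) := by
      linear_combination ((n-(t+s))*(n+(t+s))) * hy2
    rw [← mul_le_mul_iff_right₀ hnn, h3, h1]
    linarith [key0, e1]
  have hpxley : ‖p - x‖ ≤ ‖y - x‖ := by
    nlinarith [hsq, norm_nonneg (y - x), norm_nonneg (p - x)]
  have hsy : s ≤ ‖y - x‖ := le_of_lt (lt_of_lt_of_le hpx hpxley)
  -- last gap
  have hsub : p - y = (((t+s)/n - 1 : ℝ)) • y := by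
    rw [hpdef, sub_smul, one_smul]
  have hadd : p + y = (((t+s)/n + 1 : ℝ)) • y := by
    rw [hpdef, add_smul, one_smul]
  have hlast : ‖w 7 - w 8‖ = n - (t + s) := by
    rw [hw7, hw8, hsub, norm_smul, Real.norm_eq_abs,
      _root_.abs_of_nonpos (by rw [div_sub_one (ne_of_gt hy0)]; exact div_nonpos_of_nonpos_of_nonneg (by linarith) hy0.le), ← hn]
    field_simp; ring
  have hladd : ‖w 7 + w 8‖ = n + (t + s) := by
    rw [hw7, hw8, hadd, norm_smul, Real.norm_eq_abs, _root_.abs_of_nonneg (by positivity), ← hn]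
    field_simp; ring
  refine ⟨7, w, by norm_num, by norm_num, hw0, hw8, hnorm, ?_, ?_⟩
  · intro i hi
    rcases Nat.lt_or_ge i 7 with h | h
    · have := hstep' i (by omega)
      linarith
    · have h7 : i = 7 := by omega
      rw [h7, hlast]
      have := norm_sub_norm_le y x
      rw [hx] at this
      linarith
  · intro i hi
    apply ball_avoid
    rcases Nat.lt_or_ge i 7 with h | h
    · exact pair_bound s t hts ht _ _ (hnorm' i (by omega)) (hnorm' (i+1) (by omega))
        (hstep' i (by omega))
    · have h7 : i = 7 := by omega
      rw [h7, hlast, hladd]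
      linarith

/-- Chain corollary in `ℝ²`: for `s ≥ t > 0` and `‖y‖ ≥ ‖x‖ = t + s`, if the radial
projection of `y` to the circle of radius `‖x‖` is at distance more than `s` from `x`,
then `x` and `y` are joined by a chain of at most `8` points of norm `t + s`, with
consecutive gaps at most `‖y - x‖`, whose diameter balls avoid `B_t(0)`. -/
theorem chain_corollary_dim2 (s t : ℝ) (hts : t ≤ s) (ht : 0 < t)
    (x y : EuclideanSpace ℝ (Fin 2))
    (hx : ‖x‖ = t + s) (hxy : ‖x‖ ≤ ‖y‖)
    (hproj : s < ‖(‖x‖ / ‖y‖) • y - x‖) :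
    ∃ (m : ℕ) (w : ℕ → EuclideanSpace ℝ (Fin 2)),
      1 ≤ m ∧ m ≤ 8 ∧
      w 0 = x ∧ w (m + 1) = y ∧
      (∀ i, 1 ≤ i → i ≤ m → ‖w i‖ = t + s) ∧
      (∀ i ≤ m, ‖w i - w (i + 1)‖ ≤ ‖y - x‖) ∧
      (∀ i ≤ m,
        Metric.ball (((1 : ℝ) / 2) • (w i + w (i + 1))) (‖w i - w (i + 1)‖ / 2) ⊆
          (Metric.ball (0 : EuclideanSpace ℝ (Fin 2)) t)ᶜ) := by
  set e : ℂ ≃ₗᵢ[ℝ] EuclideanSpace ℝ (Fin 2) := Complex.orthonormalBasisOneI.repr with he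
  set x' : ℂ := e.symm x with hx'
  set y' : ℂ := e.symm y with hy'
  have hnx : ‖x'‖ = ‖x‖ := e.symm.norm_map x
  have hny : ‖y'‖ = ‖y‖ := e.symm.norm_map y
  have hproj' : s < ‖(‖x'‖ / ‖y'‖) • y' - x'‖ := by
    have heq : (‖x'‖ / ‖y'‖) • y' - x' = e.symm ((‖x‖ / ‖y‖) • y - x) := by
      rw [map_sub, map_smul, hnx, hny]
    rw [heq, LinearIsometryEquiv.norm_map]
    exact hproj
  obtain ⟨m, w, hm1, hm2, hw0, hwm, hnorm, hgap, hball⟩ :=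
    chain_corollary_complex s t hts ht x' y' (by rw [hnx, hx]) (by rw [hnx, hny]; exact hxy)
      hproj'
  have hyx : ‖y - x‖ = ‖y' - x'‖ := by
    rw [hx', hy', ← map_sub, LinearIsometryEquiv.norm_map]
  refine ⟨m, fun i => e (w i), hm1, hm2, ?_, ?_, ?_, ?_, ?_⟩
  · show e (w 0) = x
    rw [hw0, hx']; exact e.apply_symm_apply x
  · show e (w (m + 1)) = y
    rw [hwm, hy']; exact e.apply_symm_apply y
  · intro i h1 h2
    rw [e.norm_map]; exact hnorm i h1 h2
  · intro i hi
    rw [← e.map_sub, e.norm_map, hyx]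
    exact hgap i hi
  · intro i hi z hz
    have hcenter : ((1:ℝ)/2) • (e (w i) + e (w (i+1))) = e (((1:ℝ)/2) • (w i + w (i+1))) := by
      rw [e.map_smul, e.map_add]
    have hz' : e.symm z ∈
        Metric.ball (((1:ℝ)/2) • (w i + w (i+1))) (‖w i - w (i+1)‖ / 2) := by
      rw [Metric.mem_ball] at hz ⊢
      rw [← e.dist_map, e.apply_symm_apply, ← hcenter]
      rw [← e.map_sub, e.norm_map] at hz
      exact hz
    have hmem := hball i hi hz'
    rw [Set.mem_compl_iff, Metric.mem_ball, dist_zero_right] at hmem ⊢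
    rwa [e.symm.norm_map] at hmem
end

section
/- Let n ≥ 2, let s ≥ t > 0, and let x, y ∈ ℝⁿ with ‖y‖ ≥ ‖x‖ = t + s, and suppose ‖(‖x‖/‖y‖)·y − x‖ > s. Then there exist m ∈ {1, …, 8} and points z_1, …, z_m ∈ ℝⁿ such that: (i) ‖z_1‖ = ⋯ = ‖z_m‖ = t + s and, writing w_0 = x, w_i = z_i for 1 ≤ i ≤ m, w_{m+1} = y, one has ‖w_i − w_{i+1}‖ ≤ ‖y − x‖ for every 0 ≤ i ≤ m; and (ii) for every 0 ≤ i ≤ m, the open ball of radius ‖w_i − w_{i+1}‖/2 centered at (w_i + w_{i+1})/2 is contained in ℝⁿ \ B_t(0), where B_t(0) is the open ball of radius t centered at the origin. -/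
set_option maxHeartbeats 1000000

open Real

/-- In `ℝⁿ` with `n ≥ 2`, every vector has a unit vector orthogonal to it. -/
lemma chain_exists_unit_perp (n : ℕ) (hn : 2 ≤ n) (u : EuclideanSpace ℝ (Fin n)) :
    ∃ e : EuclideanSpace ℝ (Fin n), ‖e‖ = 1 ∧ inner ℝ u e = (0:ℝ) := by
  have hne : (ℝ ∙ u)ᗮ ≠ ⊥ := by
    intro hbot
    have h1 : Module.finrank ℝ (ℝ ∙ u) ≤ 1 := by
      rcases eq_or_ne u 0 with h | h
      · rw [h, Submodule.span_zero_singleton]; simp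
      · rw [finrank_span_singleton h]
    have h2 := Submodule.finrank_add_finrank_orthogonal (𝕜 := ℝ) (ℝ ∙ u)
    rw [hbot] at h2
    simp [finrank_euclideanSpace_fin] at h2
    omega
  obtain ⟨b, hb, hb0⟩ := Submodule.exists_mem_ne_zero_of_ne_bot hne
  refine ⟨‖b‖⁻¹ • b, ?_, ?_⟩
  · rw [norm_smul]; simp [norm_ne_zero_iff.2 hb0]
  · rw [real_inner_smul_right]
    have := (Submodule.mem_orthogonal _ _).1 hb u (Submodule.mem_span_singleton_self u)
    simp [this]

/-- Decomposition of a unit vector `v` against a unit vector `u`: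
`v = cos θ • u + sin θ • e` with `θ = arccos ⟪u, v⟫` and `e` a unit vector `⊥ u`. -/
lemma chain_exists_decomp (n : ℕ) (hn : 2 ≤ n) (u v : EuclideanSpace ℝ (Fin n))
    (hu : ‖u‖ = 1) (hv : ‖v‖ = 1) (hne : v ≠ u) :
    ∃ e : EuclideanSpace ℝ (Fin n), ‖e‖ = 1 ∧ inner ℝ u e = (0:ℝ) ∧
      v = Real.cos (Real.arccos (inner ℝ u v)) • u
          + Real.sin (Real.arccos (inner ℝ u v)) • e := by
  set c : ℝ := inner ℝ u v with hc_def
  have hcabs : |c| ≤ 1 := by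
    have := abs_real_inner_le_norm u v
    rwa [hu, hv, one_mul] at this
  have hc1 : -1 ≤ c := (abs_le.1 hcabs).1
  have hc2 : c ≤ 1 := (abs_le.1 hcabs).2
  have hcos : Real.cos (Real.arccos c) = c := Real.cos_arccos hc1 hc2
  have hsin : Real.sin (Real.arccos c) = Real.sqrt (1 - c ^ 2) := Real.sin_arccos c
  set w : EuclideanSpace ℝ (Fin n) := v - c • u with hw_def
  have hwnorm : ‖w‖ ^ 2 = 1 - c ^ 2 := by
    have h := norm_sub_sq_real v (c • u)
    rw [real_inner_comm] at h
    rw [real_inner_smul_left, ← hc_def] at h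
    rw [hw_def, h, norm_smul, hv, hu]
    simp [abs_sq]
    ring
  rcases eq_or_ne w 0 with hw0 | hw0
  · -- v = c • u, so c = ±1; c = 1 impossible, so v = -u
    have hvcu : v = c • u := by rwa [hw_def, sub_eq_zero] at hw0
    have hcsq : c ^ 2 = 1 := by
      have := hwnorm; rw [hw0] at this; simp at this; linarith
    have hcm1 : c = -1 := by
      have hfac : (c - 1) * (c + 1) = 0 := by nlinarith
      rcases mul_eq_zero.1 hfac with h | h
      · exfalso
        have : c = 1 := by linarith
        rw [this, one_smul] at hvcu
        exact hne hvcu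
      · linarith
    obtain ⟨e, he, hpe⟩ := chain_exists_unit_perp n hn u
    refine ⟨e, he, hpe, ?_⟩
    rw [hvcu, hcm1, Real.arccos_neg_one]
    simp
  · have hwpos : 0 < ‖w‖ := norm_pos_iff.2 hw0
    refine ⟨‖w‖⁻¹ • w, ?_, ?_, ?_⟩
    · rw [norm_smul]; simp [ne_of_gt hwpos]
    · rw [real_inner_smul_right, hw_def, inner_sub_right, real_inner_smul_right,
        real_inner_self_eq_norm_sq, hu, ← hc_def]
      ring
    · have hsw : Real.sin (Real.arccos c) = ‖w‖ := by
        rw [hsin, ← hwnorm, Real.sqrt_sq (norm_nonneg w)]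
      rw [hcos, hsw, smul_smul, mul_inv_cancel₀ (ne_of_gt hwpos), one_smul,
        hw_def]
      abel


section ChainAux

variable {n : ℕ}

/-- Pythagoras for an orthonormal pair. -/
lemma chain_key (u e : EuclideanSpace ℝ (Fin n)) (hu1 : ‖u‖ = 1) (he1 : ‖e‖ = 1)
    (hue : inner ℝ u e = (0:ℝ)) (A B : ℝ) : ‖A • u + B • e‖ ^ 2 = A ^ 2 + B ^ 2 := by
  rw [norm_add_sq_real, real_inner_smul_left, real_inner_smul_right, hue,
    norm_smul A u, norm_smul B e, hu1, he1]
  simp only [Real.norm_eq_abs, mul_one, mul_zero]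
  rw [sq_abs, sq_abs]
  ring

lemma chain_fnorm (u e : EuclideanSpace ℝ (Fin n)) (hu1 : ‖u‖ = 1) (he1 : ‖e‖ = 1)
    (hue : inner ℝ u e = (0:ℝ)) (r a : ℝ) (hr : 0 < r) :
    ‖(r * Real.cos a) • u + (r * Real.sin a) • e‖ = r := by
  have h := chain_key u e hu1 he1 hue (r * Real.cos a) (r * Real.sin a)
  have h2 : ‖(r * Real.cos a) • u + (r * Real.sin a) • e‖ ^ 2 = r ^ 2 := by
    rw [h]
    have := Real.sin_sq_add_cos_sq a
    nlinarith
  rw [← Real.sqrt_sq (norm_nonneg _), h2, Real.sqrt_sq hr.le]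

lemma chain_chordsq (u e : EuclideanSpace ℝ (Fin n)) (hu1 : ‖u‖ = 1) (he1 : ‖e‖ = 1)
    (hue : inner ℝ u e = (0:ℝ)) (r a b : ℝ) :
    ‖((r * Real.cos a) • u + (r * Real.sin a) • e)
      - ((r * Real.cos b) • u + (r * Real.sin b) • e)‖ ^ 2
      = 2 * r ^ 2 * (1 - Real.cos (a - b)) := by
  have hdiff : ((r * Real.cos a) • u + (r * Real.sin a) • e)
      - ((r * Real.cos b) • u + (r * Real.sin b) • e)
      = (r * Real.cos a - r * Real.cos b) • u + (r * Real.sin a - r * Real.sin b) • e := by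
    module
  rw [hdiff, chain_key u e hu1 he1 hue, Real.cos_sub]
  have ha := Real.sin_sq_add_cos_sq a
  have hb := Real.sin_sq_add_cos_sq b
  nlinarith

/-- Numerical bound: a chord of angle `θ/7 ≤ π/7` on a sphere of radius `r ≤ 2s`
has length at most `s`. -/
lemma chain_chord_num (r s θ d : ℝ) (hr : 0 < r) (hr2s : r ≤ 2 * s) (hs : 0 < s)
    (hθ0 : 0 ≤ θ) (hθpi : θ ≤ π) (hd0 : 0 ≤ d)
    (hd : d ^ 2 = 2 * r ^ 2 * (1 - Real.cos (θ / 7))) : d ≤ s := by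
  have hcosb : 1 - (θ/7) ^ 2 / 2 ≤ Real.cos (θ / 7) := Real.one_sub_sq_div_two_le_cos
  have hpi : π < 3.15 := Real.pi_lt_d2
  have hθsq : θ ^ 2 ≤ 9.9225 := by nlinarith
  have h2 : d ^ 2 ≤ s ^ 2 := by nlinarith [sq_nonneg s, sq_nonneg θ]
  nlinarith

/-- The radial projection onto the ball of radius `r` does not increase distance to `x`. -/
lemma chain_proj_le (x y : EuclideanSpace ℝ (Fin n)) (r R : ℝ) (hr : 0 < r)
    (hx : ‖x‖ = r) (hR : ‖y‖ = R) (hrR : r ≤ R) :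
    ‖(r / R) • y - x‖ ≤ ‖y - x‖ := by
  have hR0 : 0 < R := lt_of_lt_of_le hr hrR
  have hp : inner ℝ y x ≤ R * r := by
    have := real_inner_le_norm y x
    rwa [hx, hR] at this
  have h1 := norm_sub_sq_real y x
  have h2 := norm_sub_sq_real ((r / R) • y) x
  rw [real_inner_smul_left] at h2
  rw [hx] at h1 h2
  have hprojnorm : ‖(r / R) • y‖ = r := by
    rw [norm_smul, Real.norm_eq_abs, abs_of_pos (by positivity), hR]
    field_simp
  rw [hprojnorm] at h2
  have hq : (r / R) * R = r := div_mul_cancel₀ r (ne_of_gt hR0)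
  have h1q : 0 ≤ 1 - r / R := by
    have : r / R ≤ 1 := (div_le_one hR0).2 hrR
    linarith
  have hsq : ‖(r / R) • y - x‖ ^ 2 ≤ ‖y - x‖ ^ 2 := by
    rw [h1, h2, hR]
    nlinarith [mul_le_mul_of_nonneg_right hp h1q, hq]
  nlinarith [norm_nonneg ((r / R) • y - x), norm_nonneg (y - x)]

/-- Ball avoidance criterion. -/
lemma chain_ball (t : ℝ) (a b : EuclideanSpace ℝ (Fin n))
    (hmid : t + ‖a - b‖ / 2 ≤ ‖((1:ℝ)/2) • (a + b)‖) :
    Metric.ball (((1:ℝ)/2) • (a + b)) (‖a - b‖ / 2) ⊆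
      (Metric.ball (0 : EuclideanSpace ℝ (Fin n)) t)ᶜ := by
  intro z hz
  simp only [Metric.mem_ball, dist_eq_norm] at hz
  simp only [Set.mem_compl_iff, Metric.mem_ball, dist_eq_norm, sub_zero, not_lt]
  have htri : ‖((1:ℝ)/2) • (a + b)‖ ≤ ‖z‖ + ‖z - ((1:ℝ)/2) • (a + b)‖ := by
    calc ‖((1:ℝ)/2) • (a + b)‖ = ‖z - (z - ((1:ℝ)/2) • (a + b))‖ := by
          congr 1; abel
      _ ≤ ‖z‖ + ‖z - ((1:ℝ)/2) • (a + b)‖ := norm_sub_le _ _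
  linarith

/-- Midpoint bound for two points on the sphere of radius `t + s`, at distance `≤ s`. -/
lemma chain_mid (s t : ℝ) (hts : t ≤ s) (ht : 0 < t) (hs : 0 < s)
    (a b : EuclideanSpace ℝ (Fin n)) (ha : ‖a‖ = t + s) (hb : ‖b‖ = t + s)
    (hd : ‖a - b‖ ≤ s) :
    t + ‖a - b‖ / 2 ≤ ‖((1:ℝ)/2) • (a + b)‖ := by
  have h1 := norm_add_sq_real a b
  have h2 := norm_sub_sq_real a b
  have hpar : ‖a + b‖ ^ 2 = 4 * (t + s) ^ 2 - ‖a - b‖ ^ 2 := by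
    rw [ha, hb] at h1 h2; nlinarith
  rw [norm_smul, Real.norm_eq_abs]
  rw [abs_of_pos (by norm_num : (0:ℝ) < 1/2)]
  have hd0 : 0 ≤ ‖a - b‖ := norm_nonneg _
  have hlt : (2 * t + ‖a - b‖) ^ 2 ≤ ‖a + b‖ ^ 2 := by nlinarith
  nlinarith [norm_nonneg (a + b)]

end ChainAux

/-- Chain corollary in `ℝⁿ` (`n ≥ 2`): for `s ≥ t > 0` and `‖y‖ ≥ ‖x‖ = t + s`, if the
radial projection of `y` to the sphere of radius `‖x‖` is at distance more than `s`
from `x`, then `x` and `y` are joined by a chain of at most `8` points of norm `t + s`,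
with consecutive gaps at most `‖y - x‖`, whose diameter balls avoid `B_t(0)`. -/
theorem chain_corollary (n : ℕ) (hn : 2 ≤ n) (s t : ℝ) (hts : t ≤ s) (ht : 0 < t)
    (x y : EuclideanSpace ℝ (Fin n))
    (hx : ‖x‖ = t + s) (hxy : ‖x‖ ≤ ‖y‖)
    (hproj : s < ‖(‖x‖ / ‖y‖) • y - x‖) :
    ∃ (m : ℕ) (w : ℕ → EuclideanSpace ℝ (Fin n)),
      1 ≤ m ∧ m ≤ 8 ∧
      w 0 = x ∧ w (m + 1) = y ∧
      (∀ i, 1 ≤ i → i ≤ m → ‖w i‖ = t + s) ∧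
      (∀ i ≤ m, ‖w i - w (i + 1)‖ ≤ ‖y - x‖) ∧
      (∀ i ≤ m,
        Metric.ball (((1 : ℝ) / 2) • (w i + w (i + 1))) (‖w i - w (i + 1)‖ / 2) ⊆
          (Metric.ball (0 : EuclideanSpace ℝ (Fin n)) t)ᶜ) := by
  have hs : 0 < s := lt_of_lt_of_le ht hts
  obtain ⟨r, hr_def⟩ : ∃ r : ℝ, r = t + s := ⟨_, rfl⟩
  obtain ⟨R, hR_def⟩ : ∃ R : ℝ, R = ‖y‖ := ⟨_, rfl⟩
  rw [← hr_def] at hx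
  have hr : 0 < r := by rw [hr_def]; positivity
  have hrR : r ≤ R := by rw [hR_def]; exact hx ▸ hxy
  have hR0 : 0 < R := lt_of_lt_of_le hr hrR
  have hRy : ‖y‖ = R := hR_def.symm
  obtain ⟨x', hx'_def⟩ : ∃ x' : EuclideanSpace ℝ (Fin n), x' = (r / R) • y := ⟨_, rfl⟩
  have hprox : s < ‖x' - x‖ := by rwa [hx, hRy, ← hx'_def] at hproj
  have hx'norm : ‖x'‖ = r := by
    rw [hx'_def, norm_smul, Real.norm_eq_abs, abs_of_pos (by positivity), hRy]
    field_simp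
  have hkey : ‖x' - x‖ ≤ ‖y - x‖ := by
    rw [hx'_def]; exact chain_proj_le x y r R hr hx hRy hrR
  obtain ⟨u, hu_def⟩ : ∃ u : EuclideanSpace ℝ (Fin n), u = r⁻¹ • x := ⟨_, rfl⟩
  obtain ⟨v, hv_def⟩ : ∃ v : EuclideanSpace ℝ (Fin n), v = R⁻¹ • y := ⟨_, rfl⟩
  have hu1 : ‖u‖ = 1 := by
    rw [hu_def, norm_smul, hx, Real.norm_eq_abs, abs_of_pos (by positivity)]
    field_simp
  have hv1 : ‖v‖ = 1 := by
    rw [hv_def, norm_smul, hRy, Real.norm_eq_abs, abs_of_pos (by positivity)]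
    field_simp
  have hxu : x = r • u := by
    rw [hu_def, smul_smul, mul_inv_cancel₀ (ne_of_gt hr), one_smul]
  have hx'v : x' = r • v := by
    rw [hx'_def, hv_def, smul_smul, div_eq_mul_inv]
  have hvu : v ≠ u := by
    intro h
    have : x' = x := by rw [hx'v, h, ← hxu]
    rw [this] at hprox; simp at hprox; linarith
  obtain ⟨e, he1, hue, hdec⟩ := chain_exists_decomp n hn u v hu1 hv1 hvu
  obtain ⟨θ, hθ_def⟩ : ∃ θ : ℝ, θ = Real.arccos (inner ℝ u v) := ⟨_, rfl⟩
  rw [← hθ_def] at hdec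
  have hθ0 : 0 ≤ θ := by rw [hθ_def]; exact Real.arccos_nonneg _
  have hθpi : θ ≤ π := by rw [hθ_def]; exact Real.arccos_le_pi _
  obtain ⟨f, hf_def⟩ : ∃ f : ℝ → EuclideanSpace ℝ (Fin n),
      f = fun a => (r * Real.cos a) • u + (r * Real.sin a) • e := ⟨_, rfl⟩
  have hfnorm : ∀ a, ‖f a‖ = r := by
    intro a
    rw [hf_def]
    exact chain_fnorm u e hu1 he1 hue r a hr
  have hr2s : r ≤ 2 * s := by rw [hr_def]; linarith
  have chord_le : ∀ a b : ℝ, b - a = θ / 7 → ‖f a - f b‖ ≤ s := by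
    intro a b hab
    have h1 : ‖f a - f b‖ ^ 2 = 2 * r ^ 2 * (1 - Real.cos (θ / 7)) := by
      rw [hf_def]
      have h := chain_chordsq u e hu1 he1 hue r a b
      rw [h]
      have hba : a - b = -(θ / 7) := by linarith
      rw [hba, Real.cos_neg]
    exact chain_chord_num r s θ _ hr hr2s hs hθ0 hθpi (norm_nonneg _) h1
  -- the radial last step
  have hx'y : ‖x' - y‖ = R - r := by
    have hsub : x' - y = (r / R - 1) • y := by
      rw [hx'_def, sub_smul, one_smul]
    rw [hsub, norm_smul, Real.norm_eq_abs, hRy,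
      abs_of_nonpos (by nlinarith [(div_le_one hR0).2 hrR] : r / R - 1 ≤ 0)]
    field_simp
    ring
  have hlast_gap : ‖x' - y‖ ≤ ‖y - x‖ := by
    rw [hx'y]
    have := norm_sub_norm_le y x
    rw [hx, hRy] at this
    linarith
  have hlast_mid : t + ‖x' - y‖ / 2 ≤ ‖((1:ℝ)/2) • (x' + y)‖ := by
    have hadd : x' + y = (r / R + 1) • y := by
      rw [hx'_def, add_smul, one_smul]
    rw [hx'y, hadd, smul_smul, norm_smul, Real.norm_eq_abs, hRy,
      abs_of_pos (by positivity)]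
    have heq : 1 / 2 * (r / R + 1) * R = (r + R) / 2 := by field_simp
    rw [heq]
    have : t ≤ r := by rw [hr_def]; linarith
    linarith
  -- define the chain
  obtain ⟨w, hw_def⟩ : ∃ w : ℕ → EuclideanSpace ℝ (Fin n),
      w = fun i : ℕ => if i ≤ 7 then f ((i : ℝ) * (θ / 7)) else y := ⟨_, rfl⟩
  have hw_le : ∀ i : ℕ, i ≤ 7 → w i = f ((i : ℝ) * (θ / 7)) := by
    intro i hi; rw [hw_def]; simp [hi]
  have hw8 : w 8 = y := by rw [hw_def]; norm_num
  have hw0 : w 0 = x := by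
    rw [hw_le 0 (by norm_num)]
    simp only [Nat.cast_zero, zero_mul, hf_def]
    rw [Real.cos_zero, Real.sin_zero, mul_one, mul_zero, zero_smul, add_zero, ← hxu]
  have hw7 : w 7 = x' := by
    rw [hw_le 7 (by norm_num)]
    have h7 : ((7:ℕ) : ℝ) * (θ / 7) = θ := by push_cast; ring
    rw [h7, hf_def]
    simp only []
    rw [hx'v, hdec]
    rw [smul_add, smul_smul, smul_smul]
  refine ⟨7, w, by norm_num, by norm_num, hw0, hw8, ?_, ?_, ?_⟩
  · intro i h1 h7
    rw [hw_le i (by omega), ← hr_def]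
    exact hfnorm _
  · intro i hi
    rcases Nat.lt_or_ge i 7 with hlt | hge
    · have h1 : w i = f ((i:ℝ) * (θ/7)) := hw_le i (by omega)
      have h2 : w (i+1) = f (((i+1:ℕ):ℝ) * (θ/7)) := hw_le (i+1) (by omega)
      rw [h1, h2]
      have hstep : ((i+1:ℕ):ℝ) * (θ/7) - (i:ℝ) * (θ/7) = θ / 7 := by push_cast; ring
      calc ‖f ((i:ℝ) * (θ/7)) - f (((i+1:ℕ):ℝ) * (θ/7))‖ ≤ s := chord_le _ _ hstep
        _ ≤ ‖y - x‖ := le_trans (le_of_lt hprox) hkey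
    · have hi7 : i = 7 := by omega
      subst hi7
      rw [hw7, hw8]
      exact hlast_gap
  · intro i hi
    rcases Nat.lt_or_ge i 7 with hlt | hge
    · have h1 : w i = f ((i:ℝ) * (θ/7)) := hw_le i (by omega)
      have h2 : w (i+1) = f (((i+1:ℕ):ℝ) * (θ/7)) := hw_le (i+1) (by omega)
      apply chain_ball
      rw [h1, h2]
      have hstep : ((i+1:ℕ):ℝ) * (θ/7) - (i:ℝ) * (θ/7) = θ / 7 := by push_cast; ring
      have hna : ‖f ((i:ℝ) * (θ/7))‖ = t + s := by rw [hfnorm, hr_def]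
      have hnb : ‖f (((i+1:ℕ):ℝ) * (θ/7))‖ = t + s := by rw [hfnorm, hr_def]
      exact chain_mid s t hts ht hs _ _ hna hnb (chord_le _ _ hstep)
    · have hi7 : i = 7 := by omega
      subst hi7
      rw [hw7, hw8]
      exact chain_ball t x' y hlast_mid
end

section
/- Let n ≥ 2, n < p < ∞, C > 0, and let u : ℝⁿ → ℝ be differentiable with x ↦ ‖∇u(x)‖^p Lebesgue integrable. Suppose u satisfies the localized Morrey estimate: for all x, y ∈ ℝⁿ, |u(x) − u(y)| ≤ C ‖x − y‖^{1−n/p} (∫_{B_{‖x−y‖/2}((x+y)/2)} ‖∇u(z)‖^p dz)^{1/p}. Then for every R > 0 and all x, y ∈ ℝⁿ with ‖x‖ ≥ 2R and ‖y‖ ≥ 2R, one has |u(x) − u(y)| ≤ 9C (∫_{ℝⁿ \ B_R(0)} ‖∇u(z)‖^p dz)^{1/p} ‖x − y‖^{1−n/p}. -/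
open MeasureTheory

set_option maxHeartbeats 2000000

private lemma exists_unit_orthogonal (n : ℕ) (hn : 2 ≤ n) (x : EuclideanSpace ℝ (Fin n)) :
    ∃ e : EuclideanSpace ℝ (Fin n), ‖e‖ = 1 ∧ inner ℝ x e = (0:ℝ) := by
  have h0 : (0 : ℕ) < n := by omega
  have h1 : (1 : ℕ) < n := by omega
  set i0 : Fin n := ⟨0, h0⟩
  set i1 : Fin n := ⟨1, h1⟩
  by_cases hx : x i0 = 0
  · refine ⟨EuclideanSpace.single i0 1, ?_, ?_⟩
    · simp [EuclideanSpace.norm_single]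
    · rw [EuclideanSpace.inner_single_right]; simp [hx]
  · set v : EuclideanSpace ℝ (Fin n) :=
      EuclideanSpace.single i0 (x i1) - EuclideanSpace.single i1 (x i0) with hv
    have hvne : v ≠ 0 := by
      intro h
      have := congrArg (fun w => w i1) h
      simp [hv, EuclideanSpace.single_apply, i0, i1, Fin.ext_iff] at this
      exact hx this
    have hinner : inner ℝ x v = (0:ℝ) := by
      rw [hv, inner_sub_right, EuclideanSpace.inner_single_right,
        EuclideanSpace.inner_single_right]
      simp [mul_comm]
    refine ⟨‖v‖⁻¹ • v, ?_, ?_⟩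
    · rw [norm_smul, norm_inv, norm_norm, inv_mul_cancel₀ (norm_ne_zero_iff.mpr hvne)]
    · rw [real_inner_smul_right, hinner, mul_zero]

private lemma exists_frame (n : ℕ) (hn : 2 ≤ n) (a b : EuclideanSpace ℝ (Fin n))
    (ha : ‖a‖ = 1) (hb : ‖b‖ = 1) :
    ∃ (e : EuclideanSpace ℝ (Fin n)) (θ : ℝ), ‖e‖ = 1 ∧ inner ℝ a e = (0:ℝ) ∧
      0 ≤ θ ∧ θ ≤ Real.pi ∧ b = Real.cos θ • a + Real.sin θ • e := by
  set t : ℝ := inner ℝ a b with ht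
  have htle : |t| ≤ 1 := by
    have := abs_real_inner_le_norm a b
    rwa [ha, hb, one_mul] at this
  set θ := Real.arccos t with hθ
  have hcos : Real.cos θ = t := Real.cos_arccos (neg_le_of_abs_le htle) (le_of_abs_le htle)
  have hsin : Real.sin θ = Real.sqrt (1 - t^2) := Real.sin_arccos t
  set w : EuclideanSpace ℝ (Fin n) := b - t • a with hw
  have haw : inner ℝ a w = (0:ℝ) := by
    rw [hw, inner_sub_right, real_inner_smul_right, real_inner_self_eq_norm_sq, ha,
      one_pow, mul_one, ht, sub_self]
  have hnw : ‖w‖^2 = 1 - t^2 := by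
    have h2 : ‖w‖^2 = ‖b‖^2 - 2 * (t * inner ℝ b a) + t^2 * ‖a‖^2 := by
      rw [hw, norm_sub_sq_real, real_inner_smul_right, norm_smul]
      simp [mul_pow, Real.norm_eq_abs, sq_abs]
    rw [h2, real_inner_comm a b, ← ht, hb, ha]; ring
  by_cases hw0 : w = 0
  · obtain ⟨e, he1, he2⟩ := exists_unit_orthogonal n hn a
    refine ⟨e, θ, he1, he2, Real.arccos_nonneg t, Real.arccos_le_pi t, ?_⟩
    have hsin0 : Real.sin θ = 0 := by
      rw [hsin]
      have : (1:ℝ) - t^2 = 0 := by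
        have := hnw; rw [hw0] at this; simpa using this.symm
      rw [this, Real.sqrt_zero]
    have hba : b = t • a := by
      have := hw0; rw [hw, sub_eq_zero] at this; exact this
    rw [hsin0, hcos, zero_smul, add_zero, hba]
  · refine ⟨‖w‖⁻¹ • w, θ, ?_, ?_, Real.arccos_nonneg t, Real.arccos_le_pi t, ?_⟩
    · rw [norm_smul, norm_inv, norm_norm, inv_mul_cancel₀ (norm_ne_zero_iff.mpr hw0)]
    · rw [real_inner_smul_right, haw, mul_zero]
    · rw [hcos, hsin]
      have hnw' : Real.sqrt (1 - t^2) = ‖w‖ := by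
        rw [← hnw]; exact Real.sqrt_sq (norm_nonneg w)
      rw [hnw', smul_smul, mul_inv_cancel₀ (norm_ne_zero_iff.mpr hw0), one_smul, hw]
      abel


private lemma trig_diff (β γ : ℝ) : (Real.cos β - Real.cos γ)^2 + (Real.sin β - Real.sin γ)^2
    = 2 - 2*Real.cos (γ - β) := by
  rw [Real.cos_sub]
  linear_combination Real.sin_sq_add_cos_sq β + Real.sin_sq_add_cos_sq γ

private lemma trig_sum (β γ : ℝ) : (Real.cos β + Real.cos γ)^2 + (Real.sin β + Real.sin γ)^2
    = 2 + 2*Real.cos (γ - β) := by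
  rw [Real.cos_sub]
  linear_combination Real.sin_sq_add_cos_sq β + Real.sin_sq_add_cos_sq γ

private lemma chord_le (ρ s B c : ℝ) (hρ : ρ = 3/2*s) (hs : 0 < s) (hB0 : 0 ≤ B)
    (hB : B^2 = ρ^2*(2-2*c)) (hc : 0.862 ≤ c) : B ≤ 1*s := by
  subst hρ
  nlinarith [sq_nonneg (B - s), sq_nonneg (B + s), mul_pos hs hs]

private lemma sum_ge (ρ s A B c R : ℝ) (hρ : ρ = 3/2*s) (hR : R < s) (hs : 0 < s)
    (hA0 : 0 ≤ A) (hB0 : 0 ≤ B) (hA : A^2 = ρ^2*(2+2*c)) (hB : B^2 = ρ^2*(2-2*c))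
    (hc : 0.862 ≤ c) (hc1 : c ≤ 1) : 2*R + B ≤ A := by
  subst hρ
  have hABsq : (A*B)^2 = ((3/2*s)^2*(2+2*c))*((3/2*s)^2*(2-2*c)) := by
    rw [mul_pow, hA, hB]
  have hK0 : (0:ℝ) ≤ 1.014*(3/2*s)^2 := by positivity
  have hcc : 4 - 4*c^2 ≤ 1.028196 := by nlinarith [sq_nonneg (c - 0.862)]
  have hsq : (A*B)^2 ≤ (1.014*(3/2*s)^2)^2 := by
    nlinarith [hABsq, mul_nonneg (by linarith : (0:ℝ) ≤ 1.028196 - (4 - 4*c^2))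
      (by positivity : (0:ℝ) ≤ s^4)]
  have hABle : A*B ≤ 1.014*(3/2*s)^2 := by
    nlinarith [hsq, hK0, mul_nonneg hA0 hB0]
  have h1 : (A-B)^2 ≥ 1.972*(3/2*s)^2 := by nlinarith [hA, hB, hABle]
  have hAgeB : B ≤ A := by nlinarith [mul_pos hs hs]
  have h2 : 2*s ≤ A - B := by nlinarith [mul_pos hs hs]
  linarith

/-- Estimate for the Hölder ratio at points of large norm: if `u` satisfies the localized
Morrey estimate, then for `‖x‖, ‖y‖ ≥ 2R` the Hölder quotient is controlled by the
`L^p` norm of `∇u` outside `B_R(0)`, up to a factor `9C`. -/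
theorem holder_estimate_large_points (n : ℕ) (hn : 2 ≤ n) (p : ℝ) (hp : (n : ℝ) < p)
    (C : ℝ) (hC : 0 < C)
    (u : EuclideanSpace ℝ (Fin n) → ℝ) (hu : Differentiable ℝ u)
    (hui : Integrable (fun x => ‖gradient u x‖ ^ p))
    (hM : ∀ x y : EuclideanSpace ℝ (Fin n),
      |u x - u y| ≤ C * ‖x - y‖ ^ (1 - (n : ℝ) / p) *
        (∫ z in Metric.ball (((1 : ℝ) / 2) • (x + y)) (‖x - y‖ / 2),
          ‖gradient u z‖ ^ p) ^ (1 / p)) :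
    ∀ R : ℝ, 0 < R → ∀ x y : EuclideanSpace ℝ (Fin n), 2 * R ≤ ‖x‖ → 2 * R ≤ ‖y‖ →
      |u x - u y| ≤ 9 * C *
        (∫ z in (Metric.ball (0 : EuclideanSpace ℝ (Fin n)) R)ᶜ, ‖gradient u z‖ ^ p) ^ (1 / p) *
        ‖x - y‖ ^ (1 - (n : ℝ) / p) := by
  intro R hR x y hx hy
  have hp0 : (0:ℝ) < p := lt_trans (by positivity) hp
  set α : ℝ := 1 - (n:ℝ) / p with hα
  have hα0 : 0 ≤ α := by
    have : (n:ℝ)/p ≤ 1 := by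
      rw [div_le_one hp0]; exact hp.le
    simp [hα]; linarith
  have hα1 : α ≤ 1 := by
    have : 0 ≤ (n:ℝ)/p := by positivity
    simp [hα]; linarith
  set I : ℝ := ∫ z in (Metric.ball (0 : EuclideanSpace ℝ (Fin n)) R)ᶜ, ‖gradient u z‖ ^ p
    with hI
  have hI0 : 0 ≤ I := by
    apply setIntegral_nonneg
    · exact (Metric.isOpen_ball.isClosed_compl).measurableSet
    · intro z _; positivity
  set Ip : ℝ := I ^ (1/p) with hIp
  have hIp0 : 0 ≤ Ip := Real.rpow_nonneg hI0 _
  -- the key step estimate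
  have key : ∀ a b : EuclideanSpace ℝ (Fin n),
      R + ‖a - b‖ / 2 ≤ ‖((1:ℝ)/2) • (a + b)‖ →
      |u a - u b| ≤ C * ‖a - b‖ ^ α * Ip := by
    intro a b hab
    have hsub : Metric.ball (((1:ℝ)/2) • (a + b)) (‖a - b‖ / 2) ⊆
        (Metric.ball (0 : EuclideanSpace ℝ (Fin n)) R)ᶜ := by
      intro z hz
      rw [Metric.mem_ball, dist_eq_norm] at hz
      simp only [Set.mem_compl_iff, Metric.mem_ball, dist_zero_right, not_lt]
      have h1 : ‖((1:ℝ)/2) • (a + b)‖ - ‖z - ((1:ℝ)/2) • (a + b)‖ ≤ ‖z‖ := by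
        have := norm_sub_norm_le (((1:ℝ)/2) • (a + b)) (((1:ℝ)/2) • (a + b) - z)
        simp only [sub_sub_cancel] at this
        rw [norm_sub_rev] at this
        linarith [this]
      linarith
    have hmono : (∫ z in Metric.ball (((1:ℝ)/2) • (a + b)) (‖a - b‖ / 2),
        ‖gradient u z‖ ^ p) ≤ I := by
      apply setIntegral_mono_set hui.integrableOn
      · filter_upwards with z
        positivity
      · exact hsub.eventuallyLE
    have hball0 : (0:ℝ) ≤ ∫ z in Metric.ball (((1:ℝ)/2) • (a + b)) (‖a - b‖ / 2),
        ‖gradient u z‖ ^ p := by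
      apply setIntegral_nonneg Metric.isOpen_ball.measurableSet
      intro z _; positivity
    calc |u a - u b| ≤ C * ‖a - b‖ ^ α *
          (∫ z in Metric.ball (((1:ℝ)/2) • (a + b)) (‖a - b‖ / 2),
            ‖gradient u z‖ ^ p) ^ (1/p) := hM a b
      _ ≤ C * ‖a - b‖ ^ α * Ip := by
          apply mul_le_mul_of_nonneg_left _ (by positivity)
          exact Real.rpow_le_rpow hball0 hmono (by positivity)
  set s : ℝ := ‖x - y‖ with hs
  have hs0 : 0 ≤ s := norm_nonneg _
  have hsα0 : 0 ≤ s ^ α := Real.rpow_nonneg hs0 _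
  have key2 : ∀ a b : EuclideanSpace ℝ (Fin n), ∀ K : ℝ, 1 ≤ K → ‖a - b‖ ≤ K * s →
      R + ‖a - b‖ / 2 ≤ ‖((1:ℝ)/2) • (a + b)‖ →
      |u a - u b| ≤ C * (K * s ^ α) * Ip := by
    intro a b K hK hab hcent
    have h1 : ‖a - b‖ ^ α ≤ K * s ^ α := by
      calc ‖a - b‖ ^ α ≤ (K * s) ^ α :=
            Real.rpow_le_rpow (norm_nonneg _) hab hα0
        _ = K ^ α * s ^ α := Real.mul_rpow (by linarith) hs0
        _ ≤ K * s ^ α := by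
            apply mul_le_mul_of_nonneg_right _ hsα0
            calc K ^ α ≤ K ^ (1:ℝ) :=
                  Real.rpow_le_rpow_of_exponent_le hK hα1
              _ = K := Real.rpow_one K
    calc |u a - u b| ≤ C * ‖a - b‖ ^ α * Ip := key a b hcent
      _ ≤ C * (K * s ^ α) * Ip := by
          apply mul_le_mul_of_nonneg_right _ hIp0
          exact mul_le_mul_of_nonneg_left h1 hC.le
  by_cases hcase : R + s / 2 ≤ ‖((1:ℝ)/2) • (x + y)‖
  · -- direct case
    have := key x y hcase
    have h9 : C * s ^ α * Ip ≤ 9 * C * Ip * s ^ α := by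
      have m0 : 0 ≤ C * s ^ α * Ip := mul_nonneg (mul_nonneg hC.le hsα0) hIp0
      calc C * s ^ α * Ip ≤ 9 * (C * s ^ α * Ip) := by linarith
        _ = 9 * C * Ip * s ^ α := by ring
    calc |u x - u y| ≤ C * s ^ α * Ip := this
      _ ≤ 9 * C * Ip * s ^ α := h9
  · -- the ball meets B_R(0); build a path around the origin
    push_neg at hcase
    have hxm : ‖x‖ ≤ ‖((1:ℝ)/2) • (x + y)‖ + s / 2 := by
      have hxe : x = ((1:ℝ)/2) • (x + y) + ((1:ℝ)/2) • (x - y) := by module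
      calc ‖x‖ = ‖((1:ℝ)/2) • (x + y) + ((1:ℝ)/2) • (x - y)‖ := by rw [← hxe]
        _ ≤ ‖((1:ℝ)/2) • (x + y)‖ + ‖((1:ℝ)/2) • (x - y)‖ := norm_add_le _ _
        _ = ‖((1:ℝ)/2) • (x + y)‖ + s / 2 := by
            have h12 : ‖((1:ℝ)/2) • (x - y)‖ = s / 2 := by
              rw [norm_smul, Real.norm_eq_abs, ← hs,
                abs_of_pos (by norm_num : (0:ℝ) < (1:ℝ)/2)]
              ring
            rw [h12]
    have hym : ‖y‖ ≤ ‖((1:ℝ)/2) • (x + y)‖ + s / 2 := by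
      have hye : y = ((1:ℝ)/2) • (x + y) - ((1:ℝ)/2) • (x - y) := by module
      calc ‖y‖ = ‖((1:ℝ)/2) • (x + y) - ((1:ℝ)/2) • (x - y)‖ := by rw [← hye]
        _ ≤ ‖((1:ℝ)/2) • (x + y)‖ + ‖((1:ℝ)/2) • (x - y)‖ := norm_sub_le _ _
        _ = ‖((1:ℝ)/2) • (x + y)‖ + s / 2 := by
            have h12 : ‖((1:ℝ)/2) • (x - y)‖ = s / 2 := by
              rw [norm_smul, Real.norm_eq_abs, ← hs,
                abs_of_pos (by norm_num : (0:ℝ) < (1:ℝ)/2)]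
              ring
            rw [h12]
    have hRs : R < s := by linarith
    have hspos : 0 < s := lt_trans hR hRs
    have hx2s : ‖x‖ < 2 * s := by linarith
    have hy2s : ‖y‖ < 2 * s := by linarith
    have hx0 : x ≠ 0 := by
      intro h; rw [h, norm_zero] at hx; linarith
    have hy0 : y ≠ 0 := by
      intro h; rw [h, norm_zero] at hy; linarith
    have hxn : (0:ℝ) < ‖x‖ := norm_pos_iff.mpr hx0
    have hyn : (0:ℝ) < ‖y‖ := norm_pos_iff.mpr hy0
    obtain ⟨a, hadef⟩ : ∃ a : EuclideanSpace ℝ (Fin n), a = ‖x‖⁻¹ • x := ⟨_, rfl⟩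
    obtain ⟨b, hbdef⟩ : ∃ b : EuclideanSpace ℝ (Fin n), b = ‖y‖⁻¹ • y := ⟨_, rfl⟩
    have ha1 : ‖a‖ = 1 := by
      rw [hadef, norm_smul, norm_inv, norm_norm, inv_mul_cancel₀ hxn.ne']
    have hb1 : ‖b‖ = 1 := by
      rw [hbdef, norm_smul, norm_inv, norm_norm, inv_mul_cancel₀ hyn.ne']
    have hxa : x = ‖x‖ • a := by
      rw [hadef, smul_smul, mul_inv_cancel₀ hxn.ne', one_smul]
    have hyb : y = ‖y‖ • b := by
      rw [hbdef, smul_smul, mul_inv_cancel₀ hyn.ne', one_smul]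
    obtain ⟨e, θ, he1, hae, hθ0, hθπ, hbe⟩ := exists_frame n hn a b ha1 hb1
    obtain ⟨ρ, hρ⟩ : ∃ r : ℝ, r = 3/2 * s := ⟨_, rfl⟩
    obtain ⟨δ, hδdef⟩ : ∃ d : ℝ, d = θ / 6 := ⟨_, rfl⟩
    have hδ0 : 0 ≤ δ := by rw [hδdef]; positivity
    have hδπ : δ ≤ Real.pi / 6 := by rw [hδdef]; linarith
    have hδu : δ ≤ 0.525 := by
      have := Real.pi_lt_d2
      linarith
    have hcosδ : (0.862 : ℝ) ≤ Real.cos δ := by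
      have h : 1 - δ^2/2 ≤ Real.cos δ := Real.one_sub_sq_div_two_le_cos
      have hsq : δ^2 ≤ 0.525^2 := by
        apply pow_le_pow_left₀ hδ0 hδu
      norm_num at hsq
      linarith
    have hcosδ1 : Real.cos δ ≤ 1 := Real.cos_le_one δ
    -- the points on the arc
    obtain ⟨Q, hQ⟩ : ∃ Q : ℝ → EuclideanSpace ℝ (Fin n),
        Q = fun β => ρ • (Real.cos β • a + Real.sin β • e) := ⟨_, rfl⟩
    -- norm of a combination
    have hcomb : ∀ c d : ℝ, ‖c • a + d • e‖^2 = c^2 + d^2 := by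
      intro c d
      have h := norm_add_sq_real (c • a) (d • e)
      rw [norm_smul, norm_smul, he1, ha1, real_inner_smul_left, real_inner_smul_right,
        hae] at h
      simpa [Real.norm_eq_abs, sq_abs, mul_pow] using h
    have hQd : ∀ β γ : ℝ, ‖Q β - Q γ‖^2 = ρ^2 * (2 - 2 * Real.cos (γ - β)) := by
      intro β γ
      have hdiff : Q β - Q γ =
          ρ • ((Real.cos β - Real.cos γ) • a + (Real.sin β - Real.sin γ) • e) := by
        simp only [hQ]; module
      rw [hdiff, norm_smul, mul_pow, hcomb, trig_diff]
      simp [Real.norm_eq_abs, sq_abs]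
    have hQs : ∀ β γ : ℝ, ‖Q β + Q γ‖^2 = ρ^2 * (2 + 2 * Real.cos (γ - β)) := by
      intro β γ
      have hsum : Q β + Q γ =
          ρ • ((Real.cos β + Real.cos γ) • a + (Real.sin β + Real.sin γ) • e) := by
        simp only [hQ]; module
      rw [hsum, norm_smul, mul_pow, hcomb, trig_sum]
      simp [Real.norm_eq_abs, sq_abs]
    -- arc step estimates
    have arcstep : ∀ β : ℝ, |u (Q β) - u (Q (β + δ))| ≤ C * (1 * s ^ α) * Ip := by
      intro β
      have hd2 : ‖Q β - Q (β + δ)‖^2 = ρ^2 * (2 - 2 * Real.cos δ) := by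
        rw [hQd, show β + δ - β = δ by ring]
      have hs2 : ‖Q β + Q (β + δ)‖^2 = ρ^2 * (2 + 2 * Real.cos δ) := by
        rw [hQs, show β + δ - β = δ by ring]
      have hchord : ‖Q β - Q (β + δ)‖ ≤ 1 * s :=
        chord_le ρ s _ (Real.cos δ) hρ hspos (norm_nonneg _) hd2 hcosδ
      have hsum : 2*R + ‖Q β - Q (β + δ)‖ ≤ ‖Q β + Q (β + δ)‖ :=
        sum_ge ρ s _ _ (Real.cos δ) R hρ hRs hspos (norm_nonneg _) (norm_nonneg _)
          hs2 hd2 hcosδ hcosδ1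
      apply key2 _ _ 1 le_rfl hchord
      have hhalf : ‖((1:ℝ)/2) • (Q β + Q (β + δ))‖ = ‖Q β + Q (β + δ)‖ / 2 := by
        rw [norm_smul, Real.norm_eq_abs, abs_of_pos (by norm_num : (0:ℝ) < (1:ℝ)/2)]
        ring
      rw [hhalf]
      linarith
    -- radial step estimate
    have radstep : ∀ (v : EuclideanSpace ℝ (Fin n)), ‖v‖ = 1 → ∀ w : ℝ, 2 * R ≤ w →
        w < 2 * s →
        ‖w • v - ρ • v‖ ≤ 3/2 * s ∧ R + ‖w • v - ρ • v‖ / 2 ≤ ‖((1:ℝ)/2) • (w • v + ρ • v)‖ := by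
      intro v hv w hw1 hw2
      have hd : ‖w • v - ρ • v‖ = |w - ρ| := by
        rw [← sub_smul, norm_smul, hv, mul_one, Real.norm_eq_abs]
      have hsm : ‖((1:ℝ)/2) • (w • v + ρ • v)‖ = |w + ρ| / 2 := by
        have hcb : ((1:ℝ)/2) • (w • v + ρ • v) = ((w + ρ)/2) • v := by module
        rw [hcb, norm_smul, hv, mul_one, Real.norm_eq_abs, abs_div, abs_two]
      have hρpos : (0:ℝ) < ρ := by rw [hρ]; positivity
      constructor
      · rw [hd]
        rcases abs_cases (w - ρ) with ⟨h1, h2⟩ | ⟨h1, h2⟩ <;> linarith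
      · rw [hd, hsm, abs_of_nonneg (by linarith : (0:ℝ) ≤ w + ρ)]
        rcases abs_cases (w - ρ) with ⟨h1, h2⟩ | ⟨h1, h2⟩ <;> linarith
    have hQ0 : Q (0 * δ) = ρ • a := by
      simp [hQ]
    have hθ6 : (6:ℝ) * δ = θ := by rw [hδdef]; ring
    have hQ6 : Q (6 * δ) = ρ • b := by
      simp only [hQ, hθ6, hbe]
    -- first radial step
    have T0 : |u x - u (Q (0 * δ))| ≤ C * (3/2 * s ^ α) * Ip := by
      obtain ⟨hr1, hr2⟩ := radstep a ha1 ‖x‖ hx hx2s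
      apply key2 x (Q (0 * δ)) (3/2) (by norm_num)
      · rw [hQ0]
        calc ‖x - ρ • a‖ = ‖(‖x‖) • a - ρ • a‖ := by rw [← hxa]
          _ ≤ 3/2 * s := hr1
      · rw [hQ0]
        have h1 : ‖x - ρ • a‖ = ‖(‖x‖) • a - ρ • a‖ := by rw [← hxa]
        have h2 : ‖((1:ℝ)/2) • (x + ρ • a)‖ = ‖((1:ℝ)/2) • ((‖x‖) • a + ρ • a)‖ := by
          rw [← hxa]
        rw [h1, h2]; exact hr2
    -- last radial step
    have T7 : |u (Q (6 * δ)) - u y| ≤ C * (3/2 * s ^ α) * Ip := by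
      obtain ⟨hr1, hr2⟩ := radstep b hb1 ‖y‖ hy hy2s
      apply key2 (Q (6 * δ)) y (3/2) (by norm_num)
      · rw [hQ6]
        calc ‖ρ • b - y‖ = ‖(‖y‖) • b - ρ • b‖ := by rw [← hyb, norm_sub_rev]
          _ ≤ 3/2 * s := hr1
      · rw [hQ6]
        have h1 : ‖ρ • b - y‖ = ‖(‖y‖) • b - ρ • b‖ := by rw [← hyb, norm_sub_rev]
        have h2 : ‖((1:ℝ)/2) • (ρ • b + y)‖ = ‖((1:ℝ)/2) • ((‖y‖) • b + ρ • b)‖ := by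
          rw [← hyb, add_comm]
        rw [h1, h2]; exact hr2
    -- arc steps
    have arc : ∀ β γ : ℝ, γ = β + δ → |u (Q β) - u (Q γ)| ≤ C * (1 * s ^ α) * Ip := by
      intro β γ hγ; rw [hγ]; exact arcstep β
    have T1 := arc (0 * δ) (1 * δ) (by ring)
    have T2 := arc (1 * δ) (2 * δ) (by ring)
    have T3 := arc (2 * δ) (3 * δ) (by ring)
    have T4 := arc (3 * δ) (4 * δ) (by ring)
    have T5 := arc (4 * δ) (5 * δ) (by ring)
    have T6 := arc (5 * δ) (6 * δ) (by ring)
    -- telescoping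
    have tri : |u x - u y| ≤ |u x - u (Q (0 * δ))| + |u (Q (0 * δ)) - u (Q (1 * δ))| +
        |u (Q (1 * δ)) - u (Q (2 * δ))| + |u (Q (2 * δ)) - u (Q (3 * δ))| +
        |u (Q (3 * δ)) - u (Q (4 * δ))| + |u (Q (4 * δ)) - u (Q (5 * δ))| +
        |u (Q (5 * δ)) - u (Q (6 * δ))| + |u (Q (6 * δ)) - u y| := by
      have h0 := abs_sub_le (u x) (u (Q (0 * δ))) (u y)
      have h1 := abs_sub_le (u (Q (0 * δ))) (u (Q (1 * δ))) (u y)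
      have h2 := abs_sub_le (u (Q (1 * δ))) (u (Q (2 * δ))) (u y)
      have h3 := abs_sub_le (u (Q (2 * δ))) (u (Q (3 * δ))) (u y)
      have h4 := abs_sub_le (u (Q (3 * δ))) (u (Q (4 * δ))) (u y)
      have h5 := abs_sub_le (u (Q (4 * δ))) (u (Q (5 * δ))) (u y)
      have h6 := abs_sub_le (u (Q (5 * δ))) (u (Q (6 * δ))) (u y)
      linarith
    have hadd := add_le_add (add_le_add (add_le_add (add_le_add (add_le_add (add_le_add
      (add_le_add T0 T1) T2) T3) T4) T5) T6) T7
    calc |u x - u y| ≤ |u x - u (Q (0 * δ))| + |u (Q (0 * δ)) - u (Q (1 * δ))| +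
          |u (Q (1 * δ)) - u (Q (2 * δ))| + |u (Q (2 * δ)) - u (Q (3 * δ))| +
          |u (Q (3 * δ)) - u (Q (4 * δ))| + |u (Q (4 * δ)) - u (Q (5 * δ))| +
          |u (Q (5 * δ)) - u (Q (6 * δ))| + |u (Q (6 * δ)) - u y| := tri
      _ ≤ C * (3/2 * s ^ α) * Ip + C * (1 * s ^ α) * Ip + C * (1 * s ^ α) * Ip +
          C * (1 * s ^ α) * Ip + C * (1 * s ^ α) * Ip + C * (1 * s ^ α) * Ip +
          C * (1 * s ^ α) * Ip + C * (3/2 * s ^ α) * Ip := hadd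
      _ = 9 * C * Ip * s ^ α := by ring
end
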